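/- arXiv:2108.05338 — 5 statements merged into one kernel-verified Lean document; each statement's English description precedes it below -/
import Mathlib

section
/- Suppose S_0 is distributed according to d_μ, so that the chain is stationary and Pr(S_t = s) = d_μ(s) > 0 for all t and s. Then for every t ≥ n and every state s, the conditional expectation of the truncated followon trace satisfies E[F_{t,n} | S_t = s] = m_n(s), where m_n(s) = Σ_{j=0}^n γ^j Σ_{s'} d_μ(s') P_π^j(s', s) i(s') / d_μ(s). -/
open Matrix Finset MeasureTheory

noncomputable section

def pathVec {S A : Type} [Fintype S] [Fintype A] (d : S → ℝ) (w : ℕ → S → A → S → ℝ) :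
    ℕ → S → ℝ
  | 0 => d
  | (m+1) => fun s' => ∑ s, ∑ a, pathVec d w m s * w m s a s'

lemma path_sum {S A : Type} [Fintype S] [Fintype A]
    (d : S → ℝ) (w : ℕ → S → A → S → ℝ) :
    ∀ (m : ℕ) (f : S → ℝ),
      (∑ σ : Fin (m + 1) → S, ∑ α : Fin m → A,
        d (σ 0) * (∏ k : Fin m, w k (σ k.castSucc) (α k) (σ k.succ)) * f (σ (Fin.last m)))
      = ∑ s, pathVec d w m s * f s := by
  intro m
  induction m with
  | zero =>
      intro f
      rw [← Equiv.sum_comp (Equiv.funUnique (Fin 1) S).symm]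
      simp [pathVec]
  | succ m ih =>
      intro f
      calc
        (∑ σ : Fin (m + 2) → S, ∑ α : Fin (m + 1) → A,
            d (σ 0) * (∏ k : Fin (m+1), w k (σ k.castSucc) (α k) (σ k.succ)) * f (σ (Fin.last (m+1))))
            = ∑ pr : S × (Fin (m+1) → S), ∑ qa : A × (Fin m → A),
              d ((Fin.snocEquiv fun _ => S) pr 0) *
                (∏ k : Fin (m+1), w k ((Fin.snocEquiv fun _ => S) pr k.castSucc)
                  ((Fin.snocEquiv fun _ => A) qa k) ((Fin.snocEquiv fun _ => S) pr k.succ)) *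
                f ((Fin.snocEquiv fun _ => S) pr (Fin.last (m+1))) := by
              rw [← Equiv.sum_comp (Fin.snocEquiv fun _ => S)]
              exact Finset.sum_congr rfl fun pr _ => by
                rw [← Equiv.sum_comp (Fin.snocEquiv fun _ => A)]
        _ = ∑ x : S, ∑ σ₀ : Fin (m+1) → S, ∑ a : A, ∑ α₀ : Fin m → A,
              d (σ₀ 0) * ((∏ k : Fin m, w k (σ₀ k.castSucc) (α₀ k) (σ₀ k.succ)) *
                w m (σ₀ (Fin.last m)) a x) * f x := by
              rw [Fintype.sum_prod_type]
              refine Finset.sum_congr rfl fun x _ => Finset.sum_congr rfl fun σ₀ _ => ?_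
              rw [Fintype.sum_prod_type]
              refine Finset.sum_congr rfl fun a _ => Finset.sum_congr rfl fun α₀ _ => ?_
              have h0 : (Fin.snoc σ₀ x : Fin (m+2) → S) 0 = σ₀ 0 := by
                rw [← Fin.castSucc_zero, Fin.snoc_castSucc]
              have hlast : (Fin.snoc σ₀ x : Fin (m+2) → S) (Fin.last (m+1)) = x :=
                Fin.snoc_last _ _
              have hprod : (∏ k : Fin (m+1), w k ((Fin.snoc σ₀ x : Fin (m+2) → S) k.castSucc)
                    ((Fin.snoc α₀ a : Fin (m+1) → A) k) ((Fin.snoc σ₀ x : Fin (m+2) → S) k.succ))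
                  = (∏ k : Fin m, w k (σ₀ k.castSucc) (α₀ k) (σ₀ k.succ)) *
                      w m (σ₀ (Fin.last m)) a x := by
                rw [Fin.prod_univ_castSucc]
                congr 1
                · refine Finset.prod_congr rfl fun k _ => ?_
                  rw [Fin.succ_castSucc]
                  simp only [Fin.snoc_castSucc, Fin.val_castSucc]
                · simp [Fin.snoc_castSucc, Fin.snoc_last, Fin.succ_last]
              simp only [Fin.snocEquiv_apply, h0, hlast, hprod]
        _ = ∑ x : S, ∑ s, pathVec d w m s * (∑ a : A, w m s a x * f x) := by
              refine Finset.sum_congr rfl fun x _ => ?_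
              rw [← ih (fun e => ∑ a : A, w m e a x * f x)]
              refine Finset.sum_congr rfl fun σ₀ _ => ?_
              rw [Finset.sum_comm]
              refine Finset.sum_congr rfl fun α₀ _ => ?_
              rw [Finset.mul_sum]
              exact Finset.sum_congr rfl fun a _ => by ring
        _ = ∑ s, pathVec d w (m+1) s * f s := by
              refine Finset.sum_congr rfl fun x _ => ?_
              show _ = (∑ s, ∑ a, pathVec d w m s * w m s a x) * f x
              rw [Finset.sum_mul]
              refine Finset.sum_congr rfl fun s _ => ?_
              rw [Finset.mul_sum, Finset.sum_mul]
              exact Finset.sum_congr rfl fun a _ => by ring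

lemma pathVec_eq_d {S A : Type} [Fintype S] [Fintype A] (d : S → ℝ) (w : ℕ → S → A → S → ℝ)
    (m : ℕ) (hw : ∀ k < m, ∀ s', (∑ s, ∑ a, d s * w k s a s') = d s') :
    pathVec d w m = d := by
  induction m with
  | zero => rfl
  | succ m ih =>
      funext s'
      have hmm : pathVec d w m = d := ih (fun k hk => hw k (hk.trans (Nat.lt_succ_self m)))
      show (∑ s, ∑ a, pathVec d w m s * w m s a s') = d s'
      rw [hmm]
      exact hw m (Nat.lt_succ_self m) s'

lemma pathVec_switch {S A : Type} [Fintype S] [DecidableEq S] [Fintype A]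
    (d iS : S → ℝ) (μk πk : S → A → S → ℝ)
    (hinv : ∀ s', ∑ s, ∑ a, d s * μk s a s' = d s')
    (Pπ : Matrix S S ℝ) (hP : ∀ s s', Pπ s s' = ∑ a, πk s a s')
    (m₀ : ℕ) :
    ∀ (r : ℕ) (s'' : S),
      pathVec d (fun k s a s' => if k < m₀ then μk s a s'
        else if k = m₀ then iS s * πk s a s' else πk s a s') (m₀ + r + 1) s''
      = ∑ s', d s' * iS s' * (Pπ ^ (r + 1)) s' s'' := by
  set w : ℕ → S → A → S → ℝ := fun k s a s' => if k < m₀ then μk s a s'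
        else if k = m₀ then iS s * πk s a s' else πk s a s' with hw
  have hbase : pathVec d w m₀ = d := by
    refine pathVec_eq_d d w m₀ fun k hk s' => ?_
    simp only [hw, if_pos hk]
    exact hinv s'
  intro r
  induction r with
  | zero =>
      intro s''
      show (∑ s, ∑ a, pathVec d w m₀ s * w m₀ s a s'') = _
      rw [hbase]
      refine Finset.sum_congr rfl fun s _ => ?_
      rw [show (0+1 : ℕ) = 1 from rfl, pow_one, hP, Finset.mul_sum]
      refine Finset.sum_congr rfl fun a _ => ?_
      simp [hw, mul_assoc]
  | succ r ihr =>
      intro s''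
      show (∑ s, ∑ a, pathVec d w (m₀ + r + 1) s * w (m₀ + r + 1) s a s'') = _
      have hk : ∀ s a s', w (m₀ + r + 1) s a s' = πk s a s' := by
        intro s a s'
        simp only [hw]
        rw [if_neg (by omega), if_neg (by omega)]
      calc (∑ s, ∑ a, pathVec d w (m₀ + r + 1) s * w (m₀ + r + 1) s a s'')
          = ∑ s, pathVec d w (m₀ + r + 1) s * Pπ s s'' := by
            refine Finset.sum_congr rfl fun s _ => ?_
            rw [hP, Finset.mul_sum]
            exact Finset.sum_congr rfl fun a _ => by rw [hk]
        _ = ∑ s, (∑ s', d s' * iS s' * (Pπ ^ (r + 1)) s' s) * Pπ s s'' := by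
            refine Finset.sum_congr rfl fun s _ => ?_
            rw [ihr s]
        _ = ∑ s', d s' * iS s' * (Pπ ^ (r + 1 + 1)) s' s'' := by
            have hpow : ∀ s' : S, (Pπ ^ (r + 1 + 1)) s' s'' = ∑ s, (Pπ ^ (r+1)) s' s * Pπ s s'' := by
              intro s'; rw [pow_succ, Matrix.mul_apply]
            simp only [Finset.sum_mul]
            rw [Finset.sum_comm]
            refine Finset.sum_congr rfl fun s' _ => ?_
            rw [hpow, Finset.mul_sum]
            exact Finset.sum_congr rfl fun s _ => by ring

set_option maxHeartbeats 1000000 in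
/-- in the stationary regime (`S_0 ∼ d_μ`, `d_μ` invariant), for every
`t ≥ n` and every state `s` with the truncated followon trace
`F_{t,n} = Σ_{j=0}^n γ^j (Π_{k=t−j}^{t−1} ρ_k) i(S_{t−j})`,
`E[F_{t,n} ∣ S_t = s] = m_n(s) = Σ_{j=0}^n γ^j Σ_{s'} d_μ(s') P_π^j(s',s) i(s') / d_μ(s)`. -/
theorem truncated_trace_conditional_expectation
    {S A : Type} [Fintype S] [DecidableEq S] [Fintype A] [DecidableEq A]
    [MeasurableSpace S] [MeasurableSingletonClass S]
    [MeasurableSpace A] [MeasurableSingletonClass A]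
    (p : S → A → S → ℝ) (hp0 : ∀ s a s', 0 ≤ p s a s') (hp1 : ∀ s a, ∑ s', p s a s' = 1)
    (μpol : S → A → ℝ) (hμpos : ∀ s a, 0 < μpol s a) (hμ1 : ∀ s, ∑ a, μpol s a = 1)
    (πpol : S → A → ℝ) (hπ0 : ∀ s a, 0 ≤ πpol s a) (hπ1 : ∀ s, ∑ a, πpol s a = 1)
    (d : S → ℝ) (hd : ∀ s, 0 < d s) (hdsum : ∑ s, d s = 1)
    (hdinv : ∀ s', ∑ s, d s * (∑ a, μpol s a * p s a s') = d s')
    (γ : ℝ) (hγ0 : 0 ≤ γ) (hγ1 : γ < 1)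
    (i : S → ℝ) (hi : ∀ s, 0 < i s)
    {Ω : Type} [MeasurableSpace Ω] (ℙ : Measure Ω) [IsProbabilityMeasure ℙ]
    (St : ℕ → Ω → S) (At : ℕ → Ω → A)
    (hSt : ∀ t, Measurable (St t)) (hAt : ∀ t, Measurable (At t))
    -- the joint law of the trajectory: `S_0 ∼ d_μ`, `A_k ∼ μ(·|S_k)`, `S_{k+1} ∼ p(·|S_k,A_k)`
    (hjoint : ∀ (T : ℕ) (σ : Fin (T + 1) → S) (α : Fin T → A),
      ℙ {ω | (∀ k : Fin (T + 1), St (k : ℕ) ω = σ k) ∧ (∀ k : Fin T, At (k : ℕ) ω = α k)} =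
        ENNReal.ofReal (d (σ 0) *
          ∏ k : Fin T, (μpol (σ k.castSucc) (α k) * p (σ k.castSucc) (α k) (σ k.succ))))
    (n : ℕ) :
    ∀ t : ℕ, n ≤ t → ∀ s : S,
      (∫ ω in {ω | St t ω = s},
          (∑ j ∈ Finset.range (n + 1),
            γ ^ j * (∏ k ∈ Finset.Ico (t - j) t,
              πpol (St k ω) (At k ω) / μpol (St k ω) (At k ω)) * i (St (t - j) ω)) ∂ℙ) /
        (ℙ {ω | St t ω = s}).toReal =
      ∑ j ∈ Finset.range (n + 1),
        γ ^ j * ((∑ s', d s' * ((Matrix.of fun s₁ s₂ => ∑ a, πpol s₁ a * p s₁ a s₂) ^ j)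
            s' s * i s') / d s) := by
  intro t ht s
  have hAne : Nonempty A := by
    by_contra h
    haveI := not_nonempty_iff.mp h
    have := hμ1 s
    simp [Finset.univ_eq_empty] at this
  set Pπ : Matrix S S ℝ := Matrix.of fun s₁ s₂ => ∑ a, πpol s₁ a * p s₁ a s₂ with hPπ
  have hinvμ : ∀ s', ∑ s₁, ∑ a, d s₁ * (μpol s₁ a * p s₁ a s') = d s' := by
    intro s'
    have := hdinv s'
    simp only [Finset.mul_sum] at this
    exact this
  -- lifts
  set σl : (Fin (t+1) → S) → ℕ → S :=
    (fun σ k => if h : k < t + 1 then σ ⟨k, h⟩ else σ 0) with hσl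
  set αl : (Fin t → A) → ℕ → A :=
    (fun α k => if h : k < t then α ⟨k, h⟩ else hAne.some) with hαl
  set G : ((Fin (t+1) → S) × (Fin t → A)) → ℝ :=
    (fun x => ∑ j ∈ Finset.range (n + 1),
      γ ^ j * (∏ k ∈ Finset.Ico (t - j) t,
        πpol (σl x.1 k) (αl x.2 k) / μpol (σl x.1 k) (αl x.2 k)) * i (σl x.1 (t - j))) with hG
  set Φ : Ω → (Fin (t+1) → S) × (Fin t → A) :=
    (fun ω => (fun k : Fin (t+1) => St (k : ℕ) ω, fun k : Fin t => At (k : ℕ) ω)) with hΦdef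
  have hΦ : Measurable Φ := by
    rw [hΦdef]
    exact Measurable.prodMk
      (measurable_pi_lambda (fun ω (k : Fin (t+1)) => St (k : ℕ) ω) fun k => hSt (k : ℕ))
      (measurable_pi_lambda (fun ω (k : Fin t) => At (k : ℕ) ω) fun k => hAt (k : ℕ))
  have hGΦ : ∀ ω, (∑ j ∈ Finset.range (n + 1),
      γ ^ j * (∏ k ∈ Finset.Ico (t - j) t,
        πpol (St k ω) (At k ω) / μpol (St k ω) (At k ω)) * i (St (t - j) ω)) = G (Φ ω) := by
    intro ω
    refine Finset.sum_congr rfl fun j hj => ?_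
    have hjt : t - j < t + 1 := by omega
    have h1 : σl (Φ ω).1 (t - j) = St (t - j) ω := by
      simp only [hσl, hΦdef, dif_pos hjt]
    have h2 : (∏ k ∈ Finset.Ico (t - j) t,
        πpol (σl (Φ ω).1 k) (αl (Φ ω).2 k) / μpol (σl (Φ ω).1 k) (αl (Φ ω).2 k))
        = ∏ k ∈ Finset.Ico (t - j) t, πpol (St k ω) (At k ω) / μpol (St k ω) (At k ω) := by
      refine Finset.prod_congr rfl fun k hk => ?_
      have hkt : k < t := (Finset.mem_Ico.mp hk).2
      have hkt1 : k < t + 1 := by omega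
      simp only [hσl, hαl, hΦdef, dif_pos hkt, dif_pos hkt1]
    simp only [hG, h1, h2]
  -- cylinders
  set W : ((Fin (t+1) → S) × (Fin t → A)) → ℝ :=
    (fun x => d (x.1 0) *
      ∏ k : Fin t, (μpol (x.1 k.castSucc) (x.2 k) * p (x.1 k.castSucc) (x.2 k) (x.1 k.succ)))
    with hW
  have hWnn : ∀ x, 0 ≤ W x := by
    intro x
    exact mul_nonneg (hd _).le (Finset.prod_nonneg fun k _ =>
      mul_nonneg (hμpos _ _).le (hp0 _ _ _))
  have hpre : ∀ x : (Fin (t+1) → S) × (Fin t → A),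
      Φ ⁻¹' {x} = {ω | (∀ k : Fin (t+1), St (k : ℕ) ω = x.1 k) ∧
        (∀ k : Fin t, At (k : ℕ) ω = x.2 k)} := by
    intro x
    ext ω
    simp only [Set.mem_preimage, Set.mem_singleton_iff, Prod.ext_iff, funext_iff, hΦdef,
      Set.mem_setOf_eq]
  have hcyl : ∀ x, ℙ (Φ ⁻¹' {x}) = ENNReal.ofReal (W x) := by
    intro x
    rw [hpre x]
    exact hjoint t x.1 x.2
  set SetT : Set Ω := {ω | St t ω = s} with hSetT
  have hSmeas : MeasurableSet SetT := hSt t (measurableSet_singleton s)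
  set ν : Measure ((Fin (t+1) → S) × (Fin t → A)) := (ℙ.restrict SetT).map Φ with hν
  haveI : IsFiniteMeasure ν := Measure.isFiniteMeasure_map _ _
  have hmass : ∀ x, ν {x} = if x.1 (Fin.last t) = s then ENNReal.ofReal (W x) else 0 := by
    intro x
    rw [hν, Measure.map_apply hΦ (measurableSet_singleton x),
      Measure.restrict_apply (hΦ (measurableSet_singleton x))]
    by_cases hx : x.1 (Fin.last t) = s
    · rw [if_pos hx]
      have hsub : Φ ⁻¹' {x} ∩ SetT = Φ ⁻¹' {x} := by
        refine Set.inter_eq_self_of_subset_left fun ω hω => ?_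
        rw [hpre x] at hω
        have h1 := hω.1 (Fin.last t)
        rw [Fin.val_last] at h1
        show St t ω = s
        rw [h1, hx]
      rw [hsub, hcyl]
    · rw [if_neg hx]
      have hemp : Φ ⁻¹' {x} ∩ SetT = ∅ := by
        ext ω
        simp only [Set.mem_inter_iff, Set.mem_empty_iff_false, iff_false, not_and]
        intro hω
        rw [hpre x] at hω
        have h1 := hω.1 (Fin.last t)
        rw [Fin.val_last] at h1
        intro hst
        exact hx (h1 ▸ hst)
      rw [hemp, measure_empty]
  have hmassR : ∀ x, (ν {x}).toReal = if x.1 (Fin.last t) = s then W x else 0 := by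
    intro x
    rw [hmass x]
    by_cases hx : x.1 (Fin.last t) = s
    · rw [if_pos hx, if_pos hx, ENNReal.toReal_ofReal (hWnn x)]
    · rw [if_neg hx, if_neg hx]; simp
  -- the integral as a finite sum
  have hGmeas : Measurable G := measurable_of_countable G
  have hint : (∫ ω in SetT,
      (∑ j ∈ Finset.range (n + 1),
        γ ^ j * (∏ k ∈ Finset.Ico (t - j) t,
          πpol (St k ω) (At k ω) / μpol (St k ω) (At k ω)) * i (St (t - j) ω)) ∂ℙ)
      = ∑ x, (if x.1 (Fin.last t) = s then W x else 0) * G x := by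
    calc (∫ ω in SetT, (∑ j ∈ Finset.range (n + 1),
          γ ^ j * (∏ k ∈ Finset.Ico (t - j) t,
            πpol (St k ω) (At k ω) / μpol (St k ω) (At k ω)) * i (St (t - j) ω)) ∂ℙ)
        = ∫ ω, G (Φ ω) ∂(ℙ.restrict SetT) :=
          integral_congr_ae (Filter.Eventually.of_forall fun ω => hGΦ ω)
      _ = ∫ x, G x ∂ν := (integral_map hΦ.aemeasurable hGmeas.aestronglyMeasurable).symm
      _ = ∑ x, (ν {x}).toReal • G x := integral_fintype (Integrable.of_finite)
      _ = ∑ x, (if x.1 (Fin.last t) = s then W x else 0) * G x := by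
          refine Finset.sum_congr rfl fun x _ => ?_
          rw [hmassR x, smul_eq_mul]
  -- the denominator
  have hWpath : ∀ (f : S → ℝ) (wk : ℕ → S → A → S → ℝ),
      (∀ (σ : Fin (t+1) → S) (α : Fin t → A) (k : Fin t),
        wk k (σ k.castSucc) (α k) (σ k.succ)
          = μpol (σ k.castSucc) (α k) * p (σ k.castSucc) (α k) (σ k.succ)) → True := fun _ _ _ => trivial
  have hden : (ℙ SetT).toReal = d s := by
    have h0 : ℙ SetT = ν Set.univ := by
      rw [hν, Measure.map_apply hΦ MeasurableSet.univ, Set.preimage_univ,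
        Measure.restrict_apply_univ]
    have h1 : (ν Set.univ).toReal = ∑ x, (ν {x}).toReal := by
      have e1 : (∫ _ : ((Fin (t+1) → S) × (Fin t → A)), (1:ℝ) ∂ν) = (ν Set.univ).toReal := by
        rw [integral_const, smul_eq_mul, mul_one]
        rfl
      have e2 : (∫ _ : ((Fin (t+1) → S) × (Fin t → A)), (1:ℝ) ∂ν)
          = ∑ x, (ν {x}).toReal • (1:ℝ) := integral_fintype (Integrable.of_finite)
      rw [e1] at e2
      simpa using e2
    rw [h0, h1]
    have h2 : ∀ x : (Fin (t+1) → S) × (Fin t → A),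
        (ν {x}).toReal = d (x.1 0) *
          (∏ k : Fin t, (fun (_ : ℕ) s₁ a s₂ => μpol s₁ a * p s₁ a s₂) (k : ℕ)
            (x.1 k.castSucc) (x.2 k) (x.1 k.succ)) *
          (if x.1 (Fin.last t) = s then 1 else 0) := by
      intro x
      rw [hmassR x]
      by_cases hx : x.1 (Fin.last t) = s
      · rw [if_pos hx, if_pos hx, hW, mul_one]
      · rw [if_neg hx, if_neg hx, mul_zero]
    calc (∑ x, (ν {x}).toReal)
        = ∑ σ : Fin (t+1) → S, ∑ α : Fin t → A,
            d (σ 0) * (∏ k : Fin t, (fun (_ : ℕ) s₁ a s₂ => μpol s₁ a * p s₁ a s₂) (k : ℕ)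
              (σ k.castSucc) (α k) (σ k.succ)) * (if σ (Fin.last t) = s then 1 else 0) := by
          rw [Fintype.sum_prod_type]
          exact Finset.sum_congr rfl fun σ _ => Finset.sum_congr rfl fun α _ => h2 (σ, α)
      _ = ∑ e, pathVec d (fun (_ : ℕ) s₁ a s₂ => μpol s₁ a * p s₁ a s₂) t e *
            (if e = s then 1 else 0) :=
          path_sum (S := S) (A := A) d (fun (_ : ℕ) s₁ a s₂ => μpol s₁ a * p s₁ a s₂) t
            (fun e => if e = s then 1 else 0)
      _ = d s := by
          rw [pathVec_eq_d d _ t (fun k _ s' => hinvμ s')]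
          simp
    -- per-j sums
  have hj : ∀ j ∈ Finset.range (n+1),
      (∑ x : (Fin (t+1) → S) × (Fin t → A),
        (if x.1 (Fin.last t) = s
          then W x * (∏ k ∈ Finset.Ico (t - j) t,
              πpol (σl x.1 k) (αl x.2 k) / μpol (σl x.1 k) (αl x.2 k)) * i (σl x.1 (t - j))
          else 0))
      = ∑ s', d s' * i s' * (Pπ ^ j) s' s := by
    intro j hjmem
    have hjt : j ≤ t := le_trans (Nat.lt_succ_iff.mp (Finset.mem_range.mp hjmem)) ht
    obtain _ | jj := j
    · -- j = 0
      have hσlt : ∀ σ : Fin (t+1) → S, σl σ t = σ (Fin.last t) := by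
        intro σ
        simp only [hσl]
        rw [dif_pos (Nat.lt_succ_self t)]
        exact congrArg σ (Fin.ext rfl)
      calc (∑ x : (Fin (t+1) → S) × (Fin t → A),
            (if x.1 (Fin.last t) = s
              then W x * (∏ k ∈ Finset.Ico (t - 0) t,
                  πpol (σl x.1 k) (αl x.2 k) / μpol (σl x.1 k) (αl x.2 k)) * i (σl x.1 (t - 0))
              else 0))
          = ∑ σ : Fin (t+1) → S, ∑ α : Fin t → A,
              d (σ 0) * (∏ k : Fin t, (fun (_ : ℕ) s₁ a s₂ => μpol s₁ a * p s₁ a s₂) (k : ℕ)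
                (σ k.castSucc) (α k) (σ k.succ)) *
              (if σ (Fin.last t) = s then i (σ (Fin.last t)) else 0) := by
            rw [Fintype.sum_prod_type]
            refine Finset.sum_congr rfl fun σ _ => Finset.sum_congr rfl fun α _ => ?_
            rw [Nat.sub_zero, Finset.Ico_self, Finset.prod_empty, hσlt σ]
            by_cases hx : σ (Fin.last t) = s
            · rw [if_pos hx, if_pos hx, hW, mul_one]
            · rw [if_neg hx, if_neg hx, mul_zero]
        _ = ∑ e, pathVec d (fun (_ : ℕ) s₁ a s₂ => μpol s₁ a * p s₁ a s₂) t e *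
              (if e = s then i e else 0) :=
            path_sum (S := S) (A := A) d (fun (_ : ℕ) s₁ a s₂ => μpol s₁ a * p s₁ a s₂) t
              (fun e => if e = s then i e else 0)
        _ = ∑ s', d s' * i s' * (Pπ ^ 0) s' s := by
            rw [pathVec_eq_d d _ t (fun k _ s' => hinvμ s'), pow_zero]
            simp [Matrix.one_apply, mul_ite, ite_mul, Finset.sum_ite_eq']
    · -- j = jj + 1
      set m₀ : ℕ := t - (jj + 1) with hm₀
      have hm₀t : m₀ < t := by omega
      have hsum' : m₀ + jj + 1 = t := by omega
      set wj : ℕ → S → A → S → ℝ := (fun (k : ℕ) s₁ a s₂ =>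
        if k < m₀ then μpol s₁ a * p s₁ a s₂
        else if k = m₀ then i s₁ * (πpol s₁ a * p s₁ a s₂)
        else πpol s₁ a * p s₁ a s₂) with hwj
      have hps : ∀ e : S, pathVec d wj (m₀ + jj + 1) e
          = ∑ s', d s' * i s' * (Pπ ^ (jj + 1)) s' e := by
        intro e
        exact pathVec_switch (S := S) (A := A) d i
          (fun s₁ a s₂ => μpol s₁ a * p s₁ a s₂) (fun s₁ a s₂ => πpol s₁ a * p s₁ a s₂)
          hinvμ Pπ (fun s₁ s₂ => by rw [hPπ]; rfl) m₀ jj e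
      calc (∑ x : (Fin (t+1) → S) × (Fin t → A),
            (if x.1 (Fin.last t) = s
              then W x * (∏ k ∈ Finset.Ico (t - (jj+1)) t,
                  πpol (σl x.1 k) (αl x.2 k) / μpol (σl x.1 k) (αl x.2 k)) * i (σl x.1 (t - (jj+1)))
              else 0))
          = ∑ σ : Fin (t+1) → S, ∑ α : Fin t → A,
              d (σ 0) * (∏ k : Fin t, wj (k : ℕ) (σ k.castSucc) (α k) (σ k.succ)) *
              (if σ (Fin.last t) = s then 1 else 0) := by
            rw [Fintype.sum_prod_type]
            refine Finset.sum_congr rfl fun σ _ => Finset.sum_congr rfl fun α _ => ?_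
            by_cases hx : σ (Fin.last t) = s
            · rw [if_pos hx, if_pos hx, mul_one]
              have e1 : ∀ k : Fin t, σl σ (k : ℕ) = σ k.castSucc := by
                intro k
                simp only [hσl]
                rw [dif_pos (show (k : ℕ) < t + 1 by omega)]
                exact congrArg σ (Fin.ext rfl)
              have e2 : ∀ k : Fin t, αl α (k : ℕ) = α k := by
                intro k
                simp only [hαl]
                rw [dif_pos k.isLt]
              have hIco : Finset.Ico m₀ t = (Finset.range t).filter (fun k => m₀ ≤ k) := by
                ext k
                simp only [Finset.mem_Ico, Finset.mem_filter, Finset.mem_range]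
                omega
              have hR : (∏ k ∈ Finset.Ico (t - (jj+1)) t,
                  πpol (σl σ k) (αl α k) / μpol (σl σ k) (αl α k))
                  = ∏ k : Fin t, (if m₀ ≤ (k : ℕ)
                      then πpol (σl σ (k : ℕ)) (αl α (k : ℕ)) / μpol (σl σ (k : ℕ)) (αl α (k : ℕ))
                      else 1) := by
                rw [← hm₀, hIco, Finset.prod_filter,
                  ← Fin.prod_univ_eq_prod_range (fun k => if m₀ ≤ k
                    then πpol (σl σ k) (αl α k) / μpol (σl σ k) (αl α k) else 1) t]
              have hIfac : i (σl σ (t - (jj+1)))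
                  = ∏ k : Fin t, (if (k : ℕ) = m₀ then i (σ k.castSucc) else 1) := by
                have hcong : ∀ k : Fin t, (if (k : ℕ) = m₀ then i (σ k.castSucc) else 1)
                    = (if k = (⟨m₀, hm₀t⟩ : Fin t) then i (σ k.castSucc) else 1) := by
                  intro k
                  refine if_congr ?_ rfl rfl
                  rw [Fin.ext_iff]
                rw [Finset.prod_congr rfl fun k _ => hcong k, Finset.prod_ite_eq' Finset.univ
                  (⟨m₀, hm₀t⟩ : Fin t) (fun k => i (σ k.castSucc)), if_pos (Finset.mem_univ _),
                  ← hm₀]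
                simp only [hσl]
                rw [dif_pos (show m₀ < t + 1 by omega)]
                exact congrArg (fun e => i (σ e)) (Fin.ext rfl)
              rw [hR, hIfac, hW]
              dsimp only
              rw [mul_assoc, mul_assoc, ← Finset.prod_mul_distrib, ← Finset.prod_mul_distrib]
              congr 1
              refine Finset.prod_congr rfl fun k _ => ?_
              rw [e1 k, e2 k]
              rcases Nat.lt_trichotomy (k : ℕ) m₀ with hk | hk | hk
              · rw [if_neg (by omega), if_neg (by omega), mul_one, mul_one]
                simp only [hwj]
                rw [if_pos hk]
              · rw [if_pos (by omega), if_pos hk]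
                simp only [hwj]
                rw [if_neg (by omega), if_pos hk]
                have hne : μpol (σ k.castSucc) (α k) ≠ 0 := (hμpos _ _).ne'
                field_simp
              · rw [if_pos (by omega), if_neg (by omega), mul_one]
                simp only [hwj]
                rw [if_neg (by omega), if_neg (by omega)]
                have hne : μpol (σ k.castSucc) (α k) ≠ 0 := (hμpos _ _).ne'
                field_simp
            · rw [if_neg hx, if_neg hx, mul_zero]
        _ = ∑ e, pathVec d wj t e * (if e = s then 1 else 0) :=
            path_sum (S := S) (A := A) d wj t (fun e => if e = s then 1 else 0)
        _ = ∑ e, (∑ s', d s' * i s' * (Pπ ^ (jj + 1)) s' e) * (if e = s then 1 else 0) := by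
            refine Finset.sum_congr rfl fun e _ => ?_
            rw [show pathVec d wj t e = ∑ s', d s' * i s' * (Pπ ^ (jj + 1)) s' e from by
              rw [← hsum']
              exact hps e]
        _ = ∑ s', d s' * i s' * (Pπ ^ (jj + 1)) s' s := by
            simp [mul_ite, ite_mul, Finset.sum_ite_eq']
  -- main sum computation
  have hsum : (∑ x, (if x.1 (Fin.last t) = s then W x else 0) * G x)
      = ∑ j ∈ Finset.range (n+1), γ ^ j * (∑ s', d s' * i s' * (Pπ ^ j) s' s) := by
    calc (∑ x, (if x.1 (Fin.last t) = s then W x else 0) * G x)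
        = ∑ x : (Fin (t+1) → S) × (Fin t → A), ∑ j ∈ Finset.range (n+1),
            γ ^ j * (if x.1 (Fin.last t) = s
              then W x * (∏ k ∈ Finset.Ico (t - j) t,
                  πpol (σl x.1 k) (αl x.2 k) / μpol (σl x.1 k) (αl x.2 k)) * i (σl x.1 (t - j))
              else 0) := by
          refine Finset.sum_congr rfl fun x _ => ?_
          simp only [hG]
          rw [Finset.mul_sum]
          refine Finset.sum_congr rfl fun j _ => ?_
          by_cases hx : x.1 (Fin.last t) = s
          · rw [if_pos hx, if_pos hx]
            ring
          · rw [if_neg hx, if_neg hx]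
            ring
      _ = ∑ j ∈ Finset.range (n+1), ∑ x : (Fin (t+1) → S) × (Fin t → A),
            γ ^ j * (if x.1 (Fin.last t) = s
              then W x * (∏ k ∈ Finset.Ico (t - j) t,
                  πpol (σl x.1 k) (αl x.2 k) / μpol (σl x.1 k) (αl x.2 k)) * i (σl x.1 (t - j))
              else 0) := Finset.sum_comm
      _ = ∑ j ∈ Finset.range (n+1), γ ^ j * (∑ s', d s' * i s' * (Pπ ^ j) s' s) := by
          refine Finset.sum_congr rfl fun j hjmem => ?_
          rw [← Finset.mul_sum, hj j hjmem]
  -- conclude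
  rw [hint, hsum, hden, Finset.sum_div]
  refine Finset.sum_congr rfl fun j _ => ?_
  rw [mul_div_assoc]
  congr 1
  rw [div_left_inj' (hd s).ne']
  exact Finset.sum_congr rfl fun s' _ => by ring

end
end

section
/- For every n ∈ ℕ, ‖m_n − m‖₁ ≤ γ^{n+1} (d_{μ,max}/d_{μ,min}) ‖m‖₁ and ‖f_n − f‖_∞ ≤ γ^{n+1} (d_{μ,max}²/d_{μ,min}) ‖m‖₁, where d_{μ,max} := max_s d_μ(s) and d_{μ,min} := min_s d_μ(s). -/
open Matrix Finset

noncomputable section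

/-- The truncated emphasis `m_n := Σ_{j=0}^n γ^j D_μ⁻¹ (P_π^⊤)^j D_μ i`. -/
def truncEmph {S : Type} [Fintype S] [DecidableEq S]
    (γ : ℝ) (P : Matrix S S ℝ) (d i : S → ℝ) (n : ℕ) : S → ℝ :=
  fun s => ∑ j ∈ Finset.range (n + 1),
    γ ^ j * ((Matrix.diagonal fun s => (d s)⁻¹) * (Pᵀ) ^ j * Matrix.diagonal d).mulVec i s

/-- The emphasis `m := D_μ⁻¹ (I − γ P_π^⊤)⁻¹ D_μ i`. -/
def emph {S : Type} [Fintype S] [DecidableEq S]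
    (γ : ℝ) (P : Matrix S S ℝ) (d i : S → ℝ) : S → ℝ :=
  ((Matrix.diagonal fun s => (d s)⁻¹) * (1 - γ • Pᵀ)⁻¹ * Matrix.diagonal d).mulVec i

/-- Powers of a row-stochastic nonnegative matrix are row-stochastic and nonnegative. -/
lemma stoch_pow' {S : Type} [Fintype S] [DecidableEq S] (P : Matrix S S ℝ)
    (hP0 : ∀ s s', 0 ≤ P s s') (hP1 : ∀ s, ∑ s', P s s' = 1) (k : ℕ) :
    (∀ s s', 0 ≤ (P ^ k) s s') ∧ (∀ s, ∑ s', (P ^ k) s s' = 1) := by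
  induction k with
  | zero =>
    constructor <;> intro s
    · intro s'; simp [Matrix.one_apply]; positivity
    · simp [Matrix.one_apply]
  | succ k ih =>
    constructor
    · intro s s'
      rw [pow_succ, Matrix.mul_apply]
      exact Finset.sum_nonneg fun t _ => mul_nonneg (ih.1 s t) (hP0 t s')
    · intro s
      rw [pow_succ]
      simp only [Matrix.mul_apply]
      rw [Finset.sum_comm]
      simp_rw [← Finset.mul_sum, hP1]
      simpa using ih.2 s

/-- `1 - γ Pᵀ` is invertible when `0 ≤ γ < 1` and `P` is row-stochastic. -/
lemma unit_aux' {S : Type} [Fintype S] [DecidableEq S] (γ : ℝ) (hγ0 : 0 ≤ γ) (hγ1 : γ < 1)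
    (P : Matrix S S ℝ) (hP0 : ∀ s s', 0 ≤ P s s') (hP1 : ∀ s, ∑ s', P s s' = 1) :
    IsUnit (1 - γ • Pᵀ) := by
  rw [Matrix.isUnit_iff_isUnit_det, isUnit_iff_ne_zero]
  have hT : (1 - γ • Pᵀ) = (1 - γ • P)ᵀ := by
    rw [Matrix.transpose_sub, Matrix.transpose_one, Matrix.transpose_smul]
  rw [hT, Matrix.det_transpose]
  intro hdet
  obtain ⟨v, hv, hmv⟩ := (Matrix.exists_mulVec_eq_zero_iff).2 hdet
  rw [Matrix.sub_mulVec, Matrix.one_mulVec, Matrix.smul_mulVec, sub_eq_zero] at hmv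
  have hv' : ∀ s, v s = γ * ∑ s', P s s' * v s' := by
    intro s
    have := congrFun hmv s
    simpa [Matrix.mulVec, dotProduct] using this
  obtain ⟨t, ht⟩ := Function.ne_iff.1 hv
  obtain ⟨s₀, -, hs₀⟩ := Finset.exists_max_image Finset.univ (fun s => |v s|)
    ⟨t, Finset.mem_univ t⟩
  have hpos : 0 < |v s₀| := lt_of_lt_of_le (abs_pos.2 ht) (hs₀ t (Finset.mem_univ t))
  have : |v s₀| ≤ γ * |v s₀| := by
    calc |v s₀| = γ * |∑ s', P s₀ s' * v s'| := by rw [hv' s₀, abs_mul, abs_of_nonneg hγ0]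
    _ ≤ γ * ∑ s', P s₀ s' * |v s₀| := by
        apply mul_le_mul_of_nonneg_left _ hγ0
        refine (Finset.abs_sum_le_sum_abs _ _).trans (Finset.sum_le_sum fun s' _ => ?_)
        rw [abs_mul, abs_of_nonneg (hP0 s₀ s')]
        exact mul_le_mul_of_nonneg_left (hs₀ s' (Finset.mem_univ s')) (hP0 s₀ s')
    _ = γ * |v s₀| := by rw [← Finset.sum_mul, hP1]; ring
  nlinarith

/-- Truncated geometric series identity for the matrix inverse. -/
lemma geom_trunc' {S : Type} [Fintype S] [DecidableEq S]
    {A : Matrix S S ℝ} (hU : IsUnit (1 - A)) (n : ℕ) :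
    (1 - A)⁻¹ = (∑ j ∈ Finset.range (n + 1), A ^ j) + A ^ (n + 1) * (1 - A)⁻¹ := by
  have hinv : (1 - A) * (1 - A)⁻¹ = 1 :=
    Matrix.mul_nonsing_inv _ ((Matrix.isUnit_iff_isUnit_det _).mp hU)
  have hg : (∑ j ∈ Finset.range (n + 1), A ^ j) * (1 - A) = 1 - A ^ (n + 1) := by
    have h := geom_sum_mul A (n + 1)
    have h2 : (∑ j ∈ Finset.range (n + 1), A ^ j) * (1 - A)
        = -((∑ j ∈ Finset.range (n + 1), A ^ j) * (A - 1)) := by noncomm_ring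
    rw [h2, h, neg_sub]
  have h3 : (∑ j ∈ Finset.range (n + 1), A ^ j)
      = (1 - A)⁻¹ - A ^ (n + 1) * (1 - A)⁻¹ := by
    calc (∑ j ∈ Finset.range (n + 1), A ^ j)
        = (∑ j ∈ Finset.range (n + 1), A ^ j) * ((1 - A) * (1 - A)⁻¹) := by
          rw [hinv, mul_one]
      _ = ((∑ j ∈ Finset.range (n + 1), A ^ j) * (1 - A)) * (1 - A)⁻¹ := by rw [mul_assoc]
      _ = (1 - A ^ (n + 1)) * (1 - A)⁻¹ := by rw [hg]
      _ = (1 - A)⁻¹ - A ^ (n + 1) * (1 - A)⁻¹ := by rw [sub_mul, one_mul]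
  rw [h3]; abel

/-- The key closed form for the truncation error. -/
lemma diff_formula' {S : Type} [Fintype S] [DecidableEq S]
    (γ : ℝ) (hγ0 : 0 ≤ γ) (hγ1 : γ < 1)
    (P : Matrix S S ℝ) (hP0 : ∀ s s', 0 ≤ P s s') (hP1 : ∀ s, ∑ s', P s s' = 1)
    (d : S → ℝ) (hd : ∀ s, 0 < d s) (i : S → ℝ) (n : ℕ) :
    ∀ s, emph γ P d i s - truncEmph γ P d i n s
      = γ ^ (n + 1) * ((d s)⁻¹ * ∑ s', (P ^ (n + 1)) s' s * (d s' * emph γ P d i s')) := by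
  have hU : IsUnit (1 - γ • Pᵀ) := unit_aux' γ hγ0 hγ1 P hP0 hP1
  have hgeom := geom_trunc' hU n
  set D := Matrix.diagonal d with hDdef
  set Dinv := Matrix.diagonal (fun s => (d s)⁻¹) with hDinvdef
  set A := γ • Pᵀ with hAdef
  have hDD : D * Dinv = 1 := by
    have h1 : (fun i => d i * (d i)⁻¹) = fun _ => (1:ℝ) :=
      funext fun s => mul_inv_cancel₀ (hd s).ne'
    rw [hDdef, hDinvdef, Matrix.diagonal_mul_diagonal, h1, Matrix.diagonal_one]
  have hApow : ∀ j, A ^ j = γ ^ j • (Pᵀ) ^ j := fun j => smul_pow γ Pᵀ j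
  have hM : Dinv * (1 - A)⁻¹ * D
      = (∑ j ∈ Finset.range (n + 1), γ ^ j • (Dinv * (Pᵀ) ^ j * D))
        + (Dinv * A ^ (n + 1) * D) * (Dinv * (1 - A)⁻¹ * D) := by
    calc Dinv * (1 - A)⁻¹ * D
        = Dinv * ((∑ j ∈ Finset.range (n + 1), A ^ j) + A ^ (n + 1) * (1 - A)⁻¹) * D := by
          rw [← hgeom]
      _ = Dinv * (∑ j ∈ Finset.range (n + 1), A ^ j) * D
          + Dinv * (A ^ (n + 1) * (1 - A)⁻¹) * D := by
          rw [mul_add, add_mul]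
      _ = (∑ j ∈ Finset.range (n + 1), γ ^ j • (Dinv * (Pᵀ) ^ j * D))
          + (Dinv * A ^ (n + 1) * D) * (Dinv * (1 - A)⁻¹ * D) := by
          congr 1
          · rw [Finset.mul_sum, Finset.sum_mul]
            refine Finset.sum_congr rfl fun j _ => ?_
            rw [hApow j, Matrix.mul_smul, Matrix.smul_mul]
          · have h4 : Dinv * (A ^ (n + 1) * (1 - A)⁻¹) * D
                = Dinv * A ^ (n + 1) * (D * Dinv) * (1 - A)⁻¹ * D := by
              rw [hDD, mul_one]; noncomm_ring
            rw [h4]; noncomm_ring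
  have hvec : emph γ P d i
      = truncEmph γ P d i n + (Dinv * A ^ (n + 1) * D) *ᵥ (emph γ P d i) := by
    conv_lhs => rw [emph, hM]
    rw [Matrix.add_mulVec, ← Matrix.mulVec_mulVec]
    congr 1
    funext s
    rw [truncEmph]
    simp only [Matrix.mulVec, dotProduct, Matrix.sum_apply, Matrix.smul_apply,
      smul_eq_mul, Finset.sum_mul, Finset.mul_sum]
    rw [Finset.sum_comm]
    simp only [mul_assoc]
    rfl
  intro s
  have hdiff : emph γ P d i s - truncEmph γ P d i n s
      = ((Dinv * A ^ (n + 1) * D) *ᵥ (emph γ P d i)) s := by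
    have h := congrFun hvec s
    simp only [Pi.add_apply] at h
    linarith
  rw [hdiff, hApow]
  simp only [Matrix.smul_mul, Matrix.mul_smul, Matrix.smul_mulVec,
    Pi.smul_apply, smul_eq_mul]
  congr 1
  simp only [hDinvdef, hDdef, Matrix.mulVec, dotProduct, Matrix.mul_diagonal,
    Matrix.diagonal_mul, ← Matrix.transpose_pow, Matrix.transpose_apply, Finset.mul_sum]
  refine Finset.sum_congr rfl fun s' _ => by ring

/-- `‖m_n − m‖₁ ≤ γ^{n+1} (d_max/d_min) ‖m‖₁` and
`‖f_n − f‖_∞ ≤ γ^{n+1} (d_max²/d_min) ‖m‖₁`, where `f_n := D_μ m_n`, `f := D_μ m`. -/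
theorem truncated_emphasis_bounds
    {S : Type} [Fintype S] [DecidableEq S]
    (γ : ℝ) (hγ0 : 0 ≤ γ) (hγ1 : γ < 1)
    (P : Matrix S S ℝ) (hP0 : ∀ s s', 0 ≤ P s s') (hP1 : ∀ s, ∑ s', P s s' = 1)
    (d : S → ℝ) (hd : ∀ s, 0 < d s) (hdsum : ∑ s, d s = 1)
    (i : S → ℝ) (hi : ∀ s, 0 < i s)
    (dmax dmin : ℝ)
    (hdmax : IsGreatest (Set.range d) dmax) (hdmin : IsLeast (Set.range d) dmin)
    (n : ℕ) :
    (∑ s, |truncEmph γ P d i n s - emph γ P d i s|) ≤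
        γ ^ (n + 1) * (dmax / dmin) * ∑ s, |emph γ P d i s| ∧
      ∀ s, |d s * truncEmph γ P d i n s - d s * emph γ P d i s| ≤
        γ ^ (n + 1) * (dmax ^ 2 / dmin) * ∑ s, |emph γ P d i s| := by
  set m := emph γ P d i with hm
  set Pk := P ^ (n + 1) with hPk
  have hPk0 : ∀ s s', 0 ≤ Pk s s' := (stoch_pow' P hP0 hP1 (n + 1)).1
  have hPk1 : ∀ s, ∑ s', Pk s s' = 1 := (stoch_pow' P hP0 hP1 (n + 1)).2
  have hPkle1 : ∀ s s', Pk s s' ≤ 1 := by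
    intro s s'
    calc Pk s s' ≤ ∑ t, Pk s t :=
          Finset.single_le_sum (fun t _ => hPk0 s t) (Finset.mem_univ s')
      _ = 1 := hPk1 s
  have hform := diff_formula' γ hγ0 hγ1 P hP0 hP1 d hd i n
  have hγp : (0:ℝ) ≤ γ ^ (n + 1) := pow_nonneg hγ0 _
  have hdle : ∀ s, dmin ≤ d s := fun s => hdmin.2 ⟨s, rfl⟩
  have hdge : ∀ s, d s ≤ dmax := fun s => hdmax.2 ⟨s, rfl⟩
  obtain ⟨s₁, hs₁⟩ := hdmin.1
  have hdminpos : 0 < dmin := hs₁ ▸ hd s₁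
  have hdmaxpos : 0 < dmax := lt_of_lt_of_le hdminpos ((hs₁ ▸ hdge s₁ : dmin ≤ dmax))
  have hmabs : (0:ℝ) ≤ ∑ s, |m s| := Finset.sum_nonneg fun s _ => abs_nonneg _
  -- pointwise bound on the inner absolute sum
  have hinner : ∀ s, |∑ s', Pk s' s * (d s' * m s')| ≤ ∑ s', Pk s' s * (d s' * |m s'|) := by
    intro s
    refine (Finset.abs_sum_le_sum_abs _ _).trans (Finset.sum_le_sum fun s' _ => ?_)
    rw [abs_mul, abs_mul, abs_of_nonneg (hPk0 s' s), abs_of_nonneg (hd s').le]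
  have habs : ∀ s, |truncEmph γ P d i n s - m s|
      = γ ^ (n + 1) * ((d s)⁻¹ * |∑ s', Pk s' s * (d s' * m s')|) := by
    intro s
    rw [abs_sub_comm, hform s, abs_mul, abs_mul, abs_of_nonneg hγp,
      abs_of_nonneg (inv_nonneg.2 (hd s).le)]
  constructor
  · calc (∑ s, |truncEmph γ P d i n s - m s|)
        ≤ ∑ s, γ ^ (n + 1) * (dmin⁻¹ * ∑ s', Pk s' s * (d s' * |m s'|)) := by
          refine Finset.sum_le_sum fun s _ => ?_
          rw [habs s]
          have hsum0 : (0:ℝ) ≤ ∑ s', Pk s' s * (d s' * |m s'|) :=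
            Finset.sum_nonneg fun s' _ =>
              mul_nonneg (hPk0 s' s) (mul_nonneg (hd s').le (abs_nonneg _))
          refine mul_le_mul_of_nonneg_left ?_ hγp
          calc (d s)⁻¹ * |∑ s', Pk s' s * (d s' * m s')|
              ≤ (d s)⁻¹ * ∑ s', Pk s' s * (d s' * |m s'|) :=
                mul_le_mul_of_nonneg_left (hinner s) (inv_nonneg.2 (hd s).le)
            _ ≤ dmin⁻¹ * ∑ s', Pk s' s * (d s' * |m s'|) :=
                mul_le_mul_of_nonneg_right
                  (inv_anti₀ hdminpos (hdle s)) hsum0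
      _ = γ ^ (n + 1) * dmin⁻¹ * ∑ s', (∑ s, Pk s' s) * (d s' * |m s'|) := by
          have hswap : ∑ s, dmin⁻¹ * ∑ s', Pk s' s * (d s' * |m s'|)
              = dmin⁻¹ * ∑ s', (∑ s, Pk s' s) * (d s' * |m s'|) := by
            rw [← Finset.mul_sum, Finset.sum_comm]
            congr 1
            exact Finset.sum_congr rfl fun s' _ => (Finset.sum_mul _ _ _).symm
          rw [← Finset.mul_sum, hswap, ← mul_assoc]
      _ = γ ^ (n + 1) * dmin⁻¹ * ∑ s', d s' * |m s'| := by
          simp_rw [hPk1, one_mul]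
      _ ≤ γ ^ (n + 1) * dmin⁻¹ * ∑ s', dmax * |m s'| := by
          refine mul_le_mul_of_nonneg_left
            (Finset.sum_le_sum fun s' _ =>
              mul_le_mul_of_nonneg_right (hdge s') (abs_nonneg _))
            (mul_nonneg hγp (inv_nonneg.2 hdminpos.le))
      _ = γ ^ (n + 1) * (dmax / dmin) * ∑ s, |m s| := by
          rw [← Finset.mul_sum]; field_simp
  · intro s
    have hds := hd s
    have hkey : |d s * truncEmph γ P d i n s - d s * m s|
        = γ ^ (n + 1) * |∑ s', Pk s' s * (d s' * m s')| := by
      rw [← mul_sub, abs_mul, abs_of_nonneg hds.le, abs_sub_comm, hform s,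
        abs_mul, abs_mul, abs_of_nonneg hγp, abs_of_nonneg (inv_nonneg.2 hds.le)]
      field_simp
      rfl
    rw [hkey]
    calc γ ^ (n + 1) * |∑ s', Pk s' s * (d s' * m s')|
        ≤ γ ^ (n + 1) * ∑ s', Pk s' s * (d s' * |m s'|) :=
          mul_le_mul_of_nonneg_left (hinner s) hγp
      _ ≤ γ ^ (n + 1) * ∑ s', dmax * |m s'| := by
          refine mul_le_mul_of_nonneg_left (Finset.sum_le_sum fun s' _ => ?_) hγp
          calc Pk s' s * (d s' * |m s'|) ≤ 1 * (dmax * |m s'|) := by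
                refine mul_le_mul (hPkle1 s' s)
                  (mul_le_mul_of_nonneg_right (hdge s') (abs_nonneg _))
                  (mul_nonneg (hd s').le (abs_nonneg _)) zero_le_one
            _ = dmax * |m s'| := one_mul _
      _ = γ ^ (n + 1) * dmax * ∑ s', |m s'| := by rw [← Finset.mul_sum]; ring
      _ ≤ γ ^ (n + 1) * (dmax ^ 2 / dmin) * ∑ s, |m s| := by
          refine mul_le_mul_of_nonneg_right (mul_le_mul_of_nonneg_left ?_ hγp) hmabs
          rw [le_div_iff₀ hdminpos, sq]
          nlinarith [hdge s₁, hs₁ ▸ hdge s₁]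

end
end

section
/- If the feature matrix X has full column rank and γ^{n+1} < λ_min d_{μ,min} / ( d_{μ,max}² ‖γP_π − I‖ ‖m‖₁ ), where λ_min is the smallest eigenvalue of the symmetric matrix (1/2)( D_f(I − γP_π) + (I − γP_π^⊤) D_f ), then the matrix X^⊤ D_{f_n} (γP_π − I) X is negative definite. -/
open Matrix Finset

noncomputable section

/-- The spectral norm (ℓ2 operator norm) of a real matrix. -/
def spec {m : Type} [Fintype m] {n : Type} [Fintype n] [DecidableEq n]
    (M : Matrix m n ℝ) : ℝ :=
  ‖LinearMap.toContinuousLinearMap (Matrix.toEuclideanLin M)‖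

section Aux
variable {S : Type} [Fintype S] [DecidableEq S]

omit [DecidableEq S] in
lemma dot_eq_inner (v w : S → ℝ) :
    v ⬝ᵥ w = (inner ℝ ((WithLp.equiv 2 (S → ℝ)).symm v) ((WithLp.equiv 2 (S → ℝ)).symm w) : ℝ) := by
  simp [PiLp.inner_apply, RCLike.inner_apply, dotProduct, mul_comm]

lemma rayleigh_lower (C : Matrix S S ℝ) (hC : C.IsHermitian) (r : ℝ)
    (hr : ∀ k, r ≤ hC.eigenvalues k) (v : S → ℝ) :
    r * (v ⬝ᵥ v) ≤ v ⬝ᵥ (C *ᵥ v) := by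
  classical
  set b := hC.eigenvectorBasis with hb
  set v' : EuclideanSpace ℝ S := (WithLp.equiv 2 (S → ℝ)).symm v with hv'
  have hCv' : Matrix.toEuclideanLin C v' = (WithLp.equiv 2 (S → ℝ)).symm (C *ᵥ v) :=
    Matrix.toEuclideanLin_apply_piLp_toLp C v
  have h1 : v ⬝ᵥ (C *ᵥ v) = (inner ℝ v' (Matrix.toEuclideanLin C v') : ℝ) := by
    rw [hCv']; exact dot_eq_inner v (C *ᵥ v)
  have h2 : v ⬝ᵥ v = (inner ℝ v' v' : ℝ) := dot_eq_inner v v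
  have hrepr : ∀ x y : EuclideanSpace ℝ S, (inner ℝ x y : ℝ) = ∑ k, b.repr x k * b.repr y k := by
    intro x y
    rw [← b.repr.inner_map_map x y]
    simp only [PiLp.inner_apply, RCLike.inner_apply, starRingEnd_apply, star_trivial, mul_comm]
  have heig : ∀ k, Matrix.toEuclideanLin C (b k) = hC.eigenvalues k • b k := by
    intro k
    refine (WithLp.equiv 2 (S → ℝ)).injective ?_
    exact hC.mulVec_eigenvectorBasis k
  have hkey : ∀ k, b.repr (Matrix.toEuclideanLin C v') k = hC.eigenvalues k * b.repr v' k := by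
    intro k
    rw [b.repr_apply_apply, b.repr_apply_apply]
    have hsym := (Matrix.isHermitian_iff_isSymmetric.1 hC) (b k) v'
    rw [← hsym, heig k, real_inner_smul_left]
  calc r * (v ⬝ᵥ v) = ∑ k, r * (b.repr v' k * b.repr v' k) := by
        rw [h2, hrepr v' v', Finset.mul_sum]
    _ ≤ ∑ k, hC.eigenvalues k * (b.repr v' k * b.repr v' k) := by
        refine Finset.sum_le_sum fun k _ => ?_
        exact mul_le_mul_of_nonneg_right (hr k) (mul_self_nonneg _)
    _ = v ⬝ᵥ (C *ᵥ v) := by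
        rw [h1, hrepr v' _]
        exact Finset.sum_congr rfl fun k _ => by rw [hkey k]; ring

lemma spec_bound (M : Matrix S S ℝ) (v : S → ℝ) :
    ((M *ᵥ v) ⬝ᵥ (M *ᵥ v)) ≤ spec M ^ 2 * (v ⬝ᵥ v) := by
  have h := (LinearMap.toContinuousLinearMap (Matrix.toEuclideanLin M)).le_opNorm
      ((WithLp.equiv 2 (S → ℝ)).symm v)
  have hMv : (LinearMap.toContinuousLinearMap (Matrix.toEuclideanLin M))
      ((WithLp.equiv 2 (S → ℝ)).symm v) = (WithLp.equiv 2 (S → ℝ)).symm (M *ᵥ v) := by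
    simp only [LinearMap.coe_toContinuousLinearMap']
    exact Matrix.toEuclideanLin_apply_piLp_toLp M v
  rw [hMv] at h
  have hv : ∀ w : S → ℝ, w ⬝ᵥ w = ‖(WithLp.equiv 2 (S → ℝ)).symm w‖ ^ 2 := by
    intro w; rw [dot_eq_inner, real_inner_self_eq_norm_sq]
  rw [hv, hv]
  calc ‖(WithLp.equiv 2 (S → ℝ)).symm (M *ᵥ v)‖ ^ 2
      ≤ (spec M * ‖(WithLp.equiv 2 (S → ℝ)).symm v‖) ^ 2 := by
        apply pow_le_pow_left₀ (norm_nonneg _) h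
    _ = spec M ^ 2 * ‖(WithLp.equiv 2 (S → ℝ)).symm v‖ ^ 2 := by ring

omit [DecidableEq S] in
lemma dot_le_sqrt (x y : S → ℝ) :
    x ⬝ᵥ y ≤ Real.sqrt (x ⬝ᵥ x) * Real.sqrt (y ⬝ᵥ y) := by
  have h := Finset.sum_mul_sq_le_sq_mul_sq Finset.univ x y
  calc x ⬝ᵥ y ≤ |x ⬝ᵥ y| := le_abs_self _
    _ = Real.sqrt ((x ⬝ᵥ y) ^ 2) := (Real.sqrt_sq_eq_abs _).symm
    _ ≤ Real.sqrt ((∑ s, x s ^ 2) * ∑ s, y s ^ 2) := Real.sqrt_le_sqrt h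
    _ = Real.sqrt (x ⬝ᵥ x) * Real.sqrt (y ⬝ᵥ y) := by
        rw [Real.sqrt_mul (by positivity)]
        simp [dotProduct, sq]

omit [DecidableEq S] in
lemma sum_mulVec' {α : Type} (t : Finset α) (f : α → Matrix S S ℝ) (y : S → ℝ) :
    (∑ j ∈ t, f j) *ᵥ y = ∑ j ∈ t, (f j) *ᵥ y := by
  ext s
  simp only [Matrix.mulVec, dotProduct, Finset.sum_apply, Finset.sum_mul,
    Matrix.sum_apply]
  rw [Finset.sum_comm]

lemma pow_entry_nonneg {P : Matrix S S ℝ} (hP0 : ∀ s s', 0 ≤ P s s') (k : ℕ) :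
    ∀ s s', 0 ≤ (P ^ k) s s' := by
  induction k with
  | zero =>
      intro s s'
      rw [pow_zero, Matrix.one_apply]
      split <;> norm_num
  | succ k ih =>
      intro s s'
      rw [pow_succ, Matrix.mul_apply]
      exact Finset.sum_nonneg fun j _ => mul_nonneg (ih s j) (hP0 j s')

lemma pow_row_sum {P : Matrix S S ℝ} (hP1 : ∀ s, ∑ s', P s s' = 1) (k : ℕ) :
    ∀ s, ∑ s', (P ^ k) s s' = 1 := by
  induction k with
  | zero => intro s; simp [Matrix.one_apply]
  | succ k ih =>
      intro s
      rw [pow_succ]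
      simp only [Matrix.mul_apply]
      rw [Finset.sum_comm]
      calc ∑ j, ∑ s', (P ^ k) s j * P j s'
          = ∑ j, (P ^ k) s j * ∑ s', P j s' := by
            refine Finset.sum_congr rfl fun j _ => ?_
            rw [Finset.mul_sum]
        _ = 1 := by simp only [hP1, mul_one]; exact ih s

lemma unit_one_sub_smul {γ : ℝ} (hγ0 : 0 ≤ γ) (hγ1 : γ < 1)
    {P : Matrix S S ℝ} (hP0 : ∀ s s', 0 ≤ P s s') (hP1 : ∀ s, ∑ s', P s s' = 1) :
    IsUnit (1 - γ • Pᵀ) := by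
  rw [← Matrix.mulVec_injective_iff_isUnit, ← Matrix.coe_mulVecLin,
    ← LinearMap.ker_eq_bot, LinearMap.ker_eq_bot']
  intro v hv
  have hv' : v = γ • (Pᵀ *ᵥ v) := by
    have h : (1 - γ • Pᵀ) *ᵥ v = 0 := hv
    rw [Matrix.sub_mulVec, Matrix.one_mulVec, Matrix.smul_mulVec, sub_eq_zero] at h
    exact h
  have hT : ∑ s, |v s| ≤ γ * ∑ s, |v s| := by
    calc ∑ s, |v s| = ∑ s, γ * |(Pᵀ *ᵥ v) s| := by
          refine Finset.sum_congr rfl fun s _ => ?_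
          conv_lhs => rw [hv']
          rw [Pi.smul_apply, smul_eq_mul, abs_mul, abs_of_nonneg hγ0]
      _ ≤ ∑ s, γ * ∑ s', P s' s * |v s'| := by
          refine Finset.sum_le_sum fun s _ => ?_
          refine mul_le_mul_of_nonneg_left ?_ hγ0
          calc |(Pᵀ *ᵥ v) s| ≤ ∑ s', |Pᵀ s s' * v s'| := by
                simp only [Matrix.mulVec, dotProduct]
                exact Finset.abs_sum_le_sum_abs _ _
            _ = ∑ s', P s' s * |v s'| := by
                refine Finset.sum_congr rfl fun s' _ => ?_
                rw [Matrix.transpose_apply, abs_mul, abs_of_nonneg (hP0 s' s)]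
      _ = γ * ∑ s', (∑ s, P s' s) * |v s'| := by
          rw [← Finset.mul_sum, Finset.sum_comm]
          congr 1
          refine Finset.sum_congr rfl fun s' _ => ?_
          rw [Finset.sum_mul]
      _ = γ * ∑ s, |v s| := by simp only [hP1, one_mul]
  have h0 : 0 ≤ ∑ s, |v s| := Finset.sum_nonneg fun s _ => abs_nonneg _
  have hz : ∑ s, |v s| = 0 := by nlinarith
  funext s
  have := (Finset.sum_eq_zero_iff_of_nonneg (fun s _ => abs_nonneg (v s))).1 hz s
    (Finset.mem_univ s)
  simpa [abs_eq_zero] using this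

lemma emph_key {γ : ℝ} (hγ0 : 0 ≤ γ) (hγ1 : γ < 1)
    {P : Matrix S S ℝ} (hP0 : ∀ s s', 0 ≤ P s s') (hP1 : ∀ s, ∑ s', P s s' = 1)
    {d : S → ℝ} (hd : ∀ s, 0 < d s) (i : S → ℝ) :
    ∀ s, d s * emph γ P d i s = ((1 - γ • Pᵀ)⁻¹ *ᵥ fun t => d t * i t) s := by
  intro s
  have hdiag : Matrix.diagonal d *ᵥ i = fun t => d t * i t :=
    funext fun t => Matrix.mulVec_diagonal d i t
  show d s * (((Matrix.diagonal fun s => (d s)⁻¹) * (1 - γ • Pᵀ)⁻¹ * Matrix.diagonal d) *ᵥ i) s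
    = ((1 - γ • Pᵀ)⁻¹ *ᵥ fun t => d t * i t) s
  rw [← Matrix.mulVec_mulVec, ← Matrix.mulVec_mulVec, hdiag, Matrix.mulVec_diagonal,
    ← mul_assoc, mul_inv_cancel₀ (hd s).ne', one_mul]

lemma trunc_key {γ : ℝ}
    {P : Matrix S S ℝ}
    {d : S → ℝ} (hd : ∀ s, 0 < d s) (i : S → ℝ) (n : ℕ) :
    ∀ s, d s * truncEmph γ P d i n s
      = ((∑ j ∈ Finset.range (n + 1), (γ • Pᵀ) ^ j) *ᵥ fun t => d t * i t) s := by
  intro s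
  have hdiag : Matrix.diagonal d *ᵥ i = fun t => d t * i t :=
    funext fun t => Matrix.mulVec_diagonal d i t
  show d s * ∑ j ∈ Finset.range (n + 1),
      γ ^ j * (((Matrix.diagonal fun s => (d s)⁻¹) * (Pᵀ) ^ j * Matrix.diagonal d) *ᵥ i) s = _
  rw [sum_mulVec', Finset.sum_apply, Finset.mul_sum]
  refine Finset.sum_congr rfl fun j _ => ?_
  rw [smul_pow, Matrix.smul_mulVec, Pi.smul_apply, smul_eq_mul,
    ← Matrix.mulVec_mulVec, ← Matrix.mulVec_mulVec, hdiag, Matrix.mulVec_diagonal]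
  field_simp
  rw [mul_assoc]; exact mul_div_cancel_left₀ _ (hd s).ne'

lemma geom_inv {γ : ℝ} (hγ0 : 0 ≤ γ) (hγ1 : γ < 1)
    {P : Matrix S S ℝ} (hP0 : ∀ s s', 0 ≤ P s s') (hP1 : ∀ s, ∑ s', P s s' = 1) (n : ℕ) :
    (∑ j ∈ Finset.range (n + 1), (γ • Pᵀ) ^ j)
      = (1 - γ • Pᵀ)⁻¹ - (γ • Pᵀ) ^ (n + 1) * (1 - γ • Pᵀ)⁻¹ := by
  have hBdet : IsUnit (1 - γ • Pᵀ).det :=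
    (Matrix.isUnit_iff_isUnit_det _).1 (unit_one_sub_smul hγ0 hγ1 hP0 hP1)
  have hg := geom_sum_mul (γ • Pᵀ) (n + 1)
  have hg2 : (∑ j ∈ Finset.range (n + 1), (γ • Pᵀ) ^ j) * (1 - γ • Pᵀ)
      = 1 - (γ • Pᵀ) ^ (n + 1) := by
    have h2 := congrArg Neg.neg hg
    rw [← mul_neg, neg_sub, neg_sub] at h2
    exact h2
  calc (∑ j ∈ Finset.range (n + 1), (γ • Pᵀ) ^ j)
      = (∑ j ∈ Finset.range (n + 1), (γ • Pᵀ) ^ j) * ((1 - γ • Pᵀ) * (1 - γ • Pᵀ)⁻¹) := by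
        rw [Matrix.mul_nonsing_inv _ hBdet, mul_one]
    _ = (1 - (γ • Pᵀ) ^ (n + 1)) * (1 - γ • Pᵀ)⁻¹ := by rw [← mul_assoc, hg2]
    _ = (1 - γ • Pᵀ)⁻¹ - (γ • Pᵀ) ^ (n + 1) * (1 - γ • Pᵀ)⁻¹ := by rw [sub_mul, one_mul]

lemma diff_key {γ : ℝ} (hγ0 : 0 ≤ γ) (hγ1 : γ < 1)
    {P : Matrix S S ℝ} (hP0 : ∀ s s', 0 ≤ P s s') (hP1 : ∀ s, ∑ s', P s s' = 1)
    {d : S → ℝ} (hd : ∀ s, 0 < d s) (i : S → ℝ) (n : ℕ) :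
    ∀ s, d s * truncEmph γ P d i n s - d s * emph γ P d i s
      = -(γ ^ (n + 1) * (((P ^ (n + 1))ᵀ) *ᵥ fun t => d t * emph γ P d i t) s) := by
  intro s
  have hg : (fun t => d t * emph γ P d i t) = (1 - γ • Pᵀ)⁻¹ *ᵥ fun t => d t * i t :=
    funext (emph_key hγ0 hγ1 hP0 hP1 hd i)
  rw [trunc_key hd i n s, emph_key hγ0 hγ1 hP0 hP1 hd i s,
    show ((∑ j ∈ Finset.range (n + 1), (γ • Pᵀ) ^ j) *ᵥ fun t => d t * i t) s
        - ((1 - γ • Pᵀ)⁻¹ *ᵥ fun t => d t * i t) s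
      = (((∑ j ∈ Finset.range (n + 1), (γ • Pᵀ) ^ j) - (1 - γ • Pᵀ)⁻¹) *ᵥ
          fun t => d t * i t) s
      from by rw [Matrix.sub_mulVec]; rfl,
    geom_inv hγ0 hγ1 hP0 hP1 n, sub_sub_cancel_left, Matrix.neg_mulVec]
  rw [show (γ • Pᵀ) ^ (n + 1) = γ ^ (n + 1) • (P ^ (n + 1))ᵀ from by
    rw [smul_pow, Matrix.transpose_pow]]
  rw [← Matrix.mulVec_mulVec, ← hg, Matrix.smul_mulVec]
  simp only [Pi.neg_apply, Pi.smul_apply, smul_eq_mul]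

end Aux

set_option maxHeartbeats 1600000 in
/-- if `X` has full column rank and
`γ^{n+1} < λ_min d_min / (d_max² ‖γP − I‖ ‖m‖₁)`, then
`Xᵀ D_{f_n} (γP − I) X` is negative definite. -/
theorem truncated_emphasis_negative_definite
    {S : Type} [Fintype S] [DecidableEq S] {K : ℕ}
    (γ : ℝ) (hγ0 : 0 ≤ γ) (hγ1 : γ < 1)
    (P : Matrix S S ℝ) (hP0 : ∀ s s', 0 ≤ P s s') (hP1 : ∀ s, ∑ s', P s s' = 1)
    (d : S → ℝ) (hd : ∀ s, 0 < d s) (hdsum : ∑ s, d s = 1)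
    (i : S → ℝ) (hi : ∀ s, 0 < i s)
    (dmax dmin : ℝ)
    (hdmax : IsGreatest (Set.range d) dmax) (hdmin : IsLeast (Set.range d) dmin)
    (n : ℕ)
    (lammin : ℝ)
    (hlam : IsLeast {r : ℝ | ∃ v : S → ℝ, v ≠ 0 ∧
        (((1 : ℝ)/2) • (Matrix.diagonal (fun s => d s * emph γ P d i s) * (1 - γ • P) +
          (1 - γ • Pᵀ) * Matrix.diagonal (fun s => d s * emph γ P d i s))).mulVec v = r • v}
      lammin)
    (X : Matrix S (Fin K) ℝ) (hX : Function.Injective X.mulVec)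
    (hn : γ ^ (n + 1) <
      lammin * dmin / (dmax ^ 2 * spec (γ • P - 1) * ∑ s, |emph γ P d i s|)) :
    ∃ lam > (0 : ℝ), ∀ w : Fin K → ℝ,
      (∑ k, w k * ((Xᵀ * Matrix.diagonal (fun s => d s * truncEmph γ P d i n s) *
        (γ • P - 1) * X).mulVec w) k) ≤ -lam * ∑ k, (w k) ^ 2 := by
  classical
  have hS : Nonempty S := by
    by_contra h
    rw [not_nonempty_iff] at h
    rw [Finset.univ_eq_empty, Finset.sum_empty] at hdsum
    norm_num at hdsum
  obtain ⟨s₀⟩ := hS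
  obtain ⟨s₁, hs₁⟩ := hdmax.1
  have hdmaxpos : 0 < dmax := hs₁ ▸ hd s₁
  obtain ⟨s₂, hs₂⟩ := hdmin.1
  have hdminpos : 0 < dmin := hs₂ ▸ hd s₂
  have hminmax : dmin ≤ dmax := hs₁ ▸ hdmin.2 ⟨s₁, rfl⟩
  set C : Matrix S S ℝ :=
    ((1 : ℝ)/2) • (Matrix.diagonal (fun s => d s * emph γ P d i s) * (1 - γ • P) +
      (1 - γ • Pᵀ) * Matrix.diagonal (fun s => d s * emph γ P d i s)) with hC
  set Mm : ℝ := ∑ s, |emph γ P d i s| with hMm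
  set sp : ℝ := spec (γ • P - 1) with hsp
  have hsp0 : 0 ≤ sp := norm_nonneg _
  have hMm0 : 0 ≤ Mm := Finset.sum_nonneg fun s _ => abs_nonneg _
  have hBdet : IsUnit (1 - γ • Pᵀ).det :=
    (Matrix.isUnit_iff_isUnit_det _).1 (unit_one_sub_smul hγ0 hγ1 hP0 hP1)
  have hgvec : (fun t => d t * emph γ P d i t) = (1 - γ • Pᵀ)⁻¹ *ᵥ fun t => d t * i t :=
    funext (emph_key hγ0 hγ1 hP0 hP1 hd i)
  -- Mm > 0
  have hMmpos : 0 < Mm := by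
    rcases hMm0.lt_or_eq with h | h
    · exact h
    · exfalso
      have hm0 : ∀ s, emph γ P d i s = 0 := fun s =>
        abs_eq_zero.1 ((Finset.sum_eq_zero_iff_of_nonneg (fun s _ => abs_nonneg _)).1 h.symm s
          (Finset.mem_univ s))
      have hzero : (fun t => d t * emph γ P d i t) = (0 : S → ℝ) :=
        funext fun t => by rw [hm0 t, mul_zero]; rfl
      have h1 : (1 - γ • Pᵀ) *ᵥ ((1 - γ • Pᵀ)⁻¹ *ᵥ fun t => d t * i t)
          = fun t => d t * i t := by
        rw [Matrix.mulVec_mulVec, Matrix.mul_nonsing_inv _ hBdet, Matrix.one_mulVec]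
      rw [← hgvec, hzero, Matrix.mulVec_zero] at h1
      have h2 := congrFun h1 s₀
      have := mul_pos (hd s₀) (hi s₀)
      rw [← h2] at this
      simp at this
  -- sp > 0
  have hsppos : 0 < sp := by
    rcases hsp0.lt_or_eq with h | h
    · exact h
    · exfalso
      have hb := spec_bound (γ • P - 1) (Pi.single s₀ 1)
      rw [← hsp, ← h] at hb
      have hentry : ((γ • P - 1) *ᵥ Pi.single s₀ 1) s₀ = γ * P s₀ s₀ - 1 := by
        rw [Matrix.mulVec_single]
        simp [Matrix.sub_apply, Matrix.smul_apply, Matrix.one_apply_eq, smul_eq_mul]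
      have hP00 : P s₀ s₀ ≤ 1 := by
        rw [← hP1 s₀]
        exact Finset.single_le_sum (fun t _ => hP0 s₀ t) (Finset.mem_univ s₀)
      have hlt : γ * P s₀ s₀ - 1 < 0 := by nlinarith [hP0 s₀ s₀]
      have hge : (γ * P s₀ s₀ - 1) ^ 2
          ≤ ((γ • P - 1) *ᵥ Pi.single s₀ 1) ⬝ᵥ ((γ • P - 1) *ᵥ Pi.single s₀ 1) := by
        rw [← hentry]
        have hdd : ∀ x : S → ℝ, x s₀ ^ 2 ≤ x ⬝ᵥ x := by
          intro x
          have hxx : x ⬝ᵥ x = ∑ s, x s ^ 2 := by simp [dotProduct, sq]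
          rw [hxx]
          exact Finset.single_le_sum (f := fun s => x s ^ 2) (fun t _ => sq_nonneg _)
            (Finset.mem_univ s₀)
        exact hdd _
      have hv1 : (Pi.single s₀ 1 : S → ℝ) ⬝ᵥ (Pi.single s₀ 1 : S → ℝ) = 1 := by
        simp [dotProduct, Pi.single_apply]
      rw [hv1] at hb
      nlinarith
  -- eigenvalue lower bound for C
  have h1trans : (Matrix.diagonal (fun s => d s * emph γ P d i s) * (1 - γ • P))ᵀ
      = (1 - γ • Pᵀ) * Matrix.diagonal (fun s => d s * emph γ P d i s) := by
    rw [Matrix.transpose_mul, Matrix.diagonal_transpose, Matrix.transpose_sub,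
      Matrix.transpose_one, Matrix.transpose_smul]
  have hCherm : C.IsHermitian := by
    show Cᴴ = C
    rw [Matrix.conjTranspose_eq_transpose_of_trivial, hC, Matrix.transpose_smul,
      Matrix.transpose_add, h1trans, ← h1trans, Matrix.transpose_transpose, add_comm]
  have hr : ∀ k, lammin ≤ hCherm.eigenvalues k := by
    intro k
    refine hlam.2 ⟨(hCherm.eigenvectorBasis k : EuclideanSpace ℝ S), ?_,
      hCherm.mulVec_eigenvectorBasis k⟩
    intro hzero
    exact hCherm.eigenvectorBasis.orthonormal.ne_zero k ((WithLp.ofLp_eq_zero 2).1 hzero)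
  -- quantitative bounds
  have hD0 : 0 < dmax ^ 2 * sp * Mm := by positivity
  have hn' : γ ^ (n + 1) * (dmax ^ 2 * sp * Mm) < lammin * dmin := (lt_div_iff₀ hD0).1 hn
  have hγn0 : 0 ≤ γ ^ (n + 1) := pow_nonneg hγ0 _
  set ε : ℝ := γ ^ (n + 1) * dmax * Mm with hε
  have hε0 : 0 ≤ ε := by positivity
  have hclt : ε * sp < lammin := by
    have hA : 0 ≤ γ ^ (n + 1) * dmax * Mm * sp := by positivity
    have h1 : ε * sp * dmin ≤ γ ^ (n + 1) * (dmax ^ 2 * sp * Mm) := by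
      calc ε * sp * dmin = γ ^ (n + 1) * dmax * Mm * sp * dmin := by rw [hε]
        _ ≤ γ ^ (n + 1) * dmax * Mm * sp * dmax := mul_le_mul_of_nonneg_left hminmax hA
        _ = γ ^ (n + 1) * (dmax ^ 2 * sp * Mm) := by ring
    have h2 : ε * sp * dmin < lammin * dmin := lt_of_le_of_lt h1 hn'
    exact lt_of_mul_lt_mul_right h2 hdminpos.le
  have hlampos : 0 < lammin := lt_of_le_of_lt (by positivity : (0:ℝ) ≤ ε * sp) hclt
  -- δ bound
  set δ : S → ℝ := fun s => d s * truncEmph γ P d i n s - d s * emph γ P d i s with hδdef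
  have hδb : ∀ s, |δ s| ≤ ε := by
    intro s
    have hds := diff_key hγ0 hγ1 hP0 hP1 hd i n s
    rw [show δ s = d s * truncEmph γ P d i n s - d s * emph γ P d i s from rfl, hds,
      abs_neg, abs_mul, abs_of_nonneg hγn0]
    have hbd : |(((P ^ (n + 1))ᵀ) *ᵥ fun t => d t * emph γ P d i t) s| ≤ dmax * Mm := by
      calc |(((P ^ (n + 1))ᵀ) *ᵥ fun t => d t * emph γ P d i t) s|
          ≤ ∑ t, |(P ^ (n + 1))ᵀ s t * (d t * emph γ P d i t)| := by
            simp only [Matrix.mulVec, dotProduct]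
            exact Finset.abs_sum_le_sum_abs _ _
        _ ≤ ∑ t, dmax * |emph γ P d i t| := by
            refine Finset.sum_le_sum fun t _ => ?_
            rw [Matrix.transpose_apply, abs_mul, abs_mul,
              abs_of_nonneg (pow_entry_nonneg hP0 (n + 1) t s), abs_of_nonneg (hd t).le]
            have h1 : (P ^ (n + 1)) t s ≤ 1 := by
              rw [← pow_row_sum hP1 (n + 1) t]
              exact Finset.single_le_sum (fun u _ => pow_entry_nonneg hP0 (n + 1) t u)
                (Finset.mem_univ s)
            have h2 : d t ≤ dmax := hdmax.2 ⟨t, rfl⟩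
            have h3 : (P ^ (n + 1)) t s * d t ≤ 1 * dmax :=
              mul_le_mul h1 h2 (hd t).le zero_le_one
            calc (P ^ (n + 1)) t s * (d t * |emph γ P d i t|)
                = ((P ^ (n + 1)) t s * d t) * |emph γ P d i t| := by ring
              _ ≤ (1 * dmax) * |emph γ P d i t| :=
                  mul_le_mul_of_nonneg_right h3 (abs_nonneg _)
              _ = dmax * |emph γ P d i t| := by ring
        _ = dmax * Mm := by rw [← Finset.mul_sum, hMm]
    calc γ ^ (n + 1) * |(((P ^ (n + 1))ᵀ) *ᵥ fun t => d t * emph γ P d i t) s|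
        ≤ γ ^ (n + 1) * (dmax * Mm) := mul_le_mul_of_nonneg_left hbd hγn0
      _ = ε := by rw [hε]; ring
  -- split into the K = 0 and K > 0 cases
  rcases isEmpty_or_nonempty (Fin K) with hK | hK
  · refine ⟨1, one_pos, fun w => ?_⟩
    simp [Finset.univ_eq_empty]
  · -- X has trivial kernel: XᵀX is positive definite
    have hXpd : (Xᵀ * X).PosDef := by
      refine Matrix.PosDef.of_dotProduct_mulVec_pos ?_ ?_
      · show (Xᵀ * X)ᴴ = Xᵀ * X
        rw [Matrix.conjTranspose_eq_transpose_of_trivial, Matrix.transpose_mul,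
          Matrix.transpose_transpose]
      · intro x hx
        have hXx : X *ᵥ x ≠ 0 := by
          intro h
          exact hx (hX (h.trans (Matrix.mulVec_zero X).symm))
        have hsx : star x = x := by funext k; simp
        rw [hsx, ← Matrix.mulVec_mulVec, Matrix.dotProduct_mulVec, Matrix.vecMul_transpose]
        obtain ⟨t, ht⟩ := Function.ne_iff.1 hXx
        exact Finset.sum_pos' (fun s _ => mul_self_nonneg _)
          ⟨t, Finset.mem_univ t, mul_self_pos.2 ht⟩
    obtain ⟨k₀, _, hk₀⟩ := Finset.exists_min_image Finset.univ
      (fun k => hXpd.1.eigenvalues k) ⟨Classical.arbitrary (Fin K), Finset.mem_univ _⟩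
    set σ : ℝ := hXpd.1.eigenvalues k₀ with hσ
    have hσpos : 0 < σ := hXpd.eigenvalues_pos k₀
    have hσle : ∀ w : Fin K → ℝ, σ * (w ⬝ᵥ w) ≤ (X *ᵥ w) ⬝ᵥ (X *ᵥ w) := by
      intro w
      have h := rayleigh_lower (Xᵀ * X) hXpd.1 σ (fun k => hk₀ k (Finset.mem_univ k)) w
      rwa [← Matrix.mulVec_mulVec, Matrix.dotProduct_mulVec, Matrix.vecMul_transpose] at h
    refine ⟨(lammin - ε * sp) * σ, by nlinarith, fun w => ?_⟩
    set u : S → ℝ := X *ᵥ w with hu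
    have hQ : (∑ k, w k * ((Xᵀ * Matrix.diagonal (fun s => d s * truncEmph γ P d i n s) *
          (γ • P - 1) * X) *ᵥ w) k)
        = u ⬝ᵥ ((Matrix.diagonal (fun s => d s * truncEmph γ P d i n s) * (γ • P - 1)) *ᵥ u) := by
      have hdot : (∑ k, w k * ((Xᵀ * Matrix.diagonal (fun s => d s * truncEmph γ P d i n s) *
          (γ • P - 1) * X) *ᵥ w) k)
          = w ⬝ᵥ ((Xᵀ * Matrix.diagonal (fun s => d s * truncEmph γ P d i n s) *
          (γ • P - 1) * X) *ᵥ w) := rfl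
      rw [hdot, ← Matrix.mulVec_mulVec, Matrix.mul_assoc (Xᵀ), ← Matrix.mulVec_mulVec,
        Matrix.dotProduct_mulVec, Matrix.vecMul_transpose]
    have hsplit : Matrix.diagonal (fun s => d s * truncEmph γ P d i n s) * (γ • P - 1)
        = Matrix.diagonal (fun s => d s * emph γ P d i s) * (γ • P - 1)
          + Matrix.diagonal δ * (γ • P - 1) := by
      rw [← add_mul, Matrix.diagonal_add]
      have hfun : (fun s => d s * truncEmph γ P d i n s)
          = fun s => d s * emph γ P d i s + δ s := by
        funext s; simp only [hδdef]; ring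
      rw [hfun]
    -- Term 1
    have hT1 : u ⬝ᵥ ((Matrix.diagonal (fun s => d s * emph γ P d i s) * (γ • P - 1)) *ᵥ u)
        = -(u ⬝ᵥ (C *ᵥ u)) := by
      have hnegeq : Matrix.diagonal (fun s => d s * emph γ P d i s) * (γ • P - 1)
          = -(Matrix.diagonal (fun s => d s * emph γ P d i s) * (1 - γ • P)) := by
        rw [mul_sub, mul_sub, mul_one, neg_sub]
      have hsym : u ⬝ᵥ (((1 - γ • Pᵀ) * Matrix.diagonal (fun s => d s * emph γ P d i s)) *ᵥ u)
          = u ⬝ᵥ ((Matrix.diagonal (fun s => d s * emph γ P d i s) * (1 - γ • P)) *ᵥ u) := by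
        rw [← h1trans, Matrix.dotProduct_mulVec, Matrix.vecMul_transpose,
          dotProduct_comm]
      rw [hC, Matrix.smul_mulVec, dotProduct_smul, Matrix.add_mulVec,
        dotProduct_add, hsym, hnegeq, Matrix.neg_mulVec, dotProduct_neg,
        smul_eq_mul]
      ring
    have hT1le : -(u ⬝ᵥ (C *ᵥ u)) ≤ -(lammin * (u ⬝ᵥ u)) :=
      neg_le_neg (rayleigh_lower C hCherm lammin hr u)
    -- Term 2
    have hT2 : u ⬝ᵥ ((Matrix.diagonal δ * (γ • P - 1)) *ᵥ u) ≤ ε * sp * (u ⬝ᵥ u) := by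
      rw [← Matrix.mulVec_mulVec]
      set vδ : S → ℝ := fun s => δ s * u s with hvδ
      set z : S → ℝ := (γ • P - 1) *ᵥ u with hzdef
      have hrw : u ⬝ᵥ (Matrix.diagonal δ *ᵥ z) = vδ ⬝ᵥ z := by
        simp only [dotProduct]
        refine Finset.sum_congr rfl fun s _ => ?_
        rw [Matrix.mulVec_diagonal, hvδ]; ring
      rw [hrw]
      have h1 : vδ ⬝ᵥ vδ ≤ ε ^ 2 * (u ⬝ᵥ u) := by
        simp only [dotProduct]
        rw [Finset.mul_sum]
        refine Finset.sum_le_sum fun s _ => ?_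
        have habs := abs_le.1 (hδb s)
        have hsq : δ s * δ s ≤ ε ^ 2 := by nlinarith [habs.1, habs.2]
        calc vδ s * vδ s = (δ s * δ s) * (u s * u s) := by rw [hvδ]; ring
          _ ≤ ε ^ 2 * (u s * u s) := mul_le_mul_of_nonneg_right hsq (mul_self_nonneg _)
      have h2 : z ⬝ᵥ z ≤ sp ^ 2 * (u ⬝ᵥ u) := by
        rw [hzdef, hsp]; exact spec_bound _ u
      have hdu : 0 ≤ u ⬝ᵥ u := Finset.sum_nonneg fun s _ => mul_self_nonneg _
      calc vδ ⬝ᵥ z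
          ≤ Real.sqrt (vδ ⬝ᵥ vδ) * Real.sqrt (z ⬝ᵥ z) := dot_le_sqrt _ _
        _ ≤ Real.sqrt (ε ^ 2 * (u ⬝ᵥ u)) * Real.sqrt (sp ^ 2 * (u ⬝ᵥ u)) := by
            exact mul_le_mul (Real.sqrt_le_sqrt h1) (Real.sqrt_le_sqrt h2)
              (Real.sqrt_nonneg _) (Real.sqrt_nonneg _)
        _ = ε * sp * (u ⬝ᵥ u) := by
            rw [Real.sqrt_mul (sq_nonneg ε), Real.sqrt_mul (sq_nonneg sp),
              Real.sqrt_sq hε0, Real.sqrt_sq hsp0,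
              show ε * Real.sqrt (u ⬝ᵥ u) * (sp * Real.sqrt (u ⬝ᵥ u))
                = ε * sp * (Real.sqrt (u ⬝ᵥ u) * Real.sqrt (u ⬝ᵥ u)) from by ring,
              Real.mul_self_sqrt hdu]
    -- combine
    have hww : (∑ k, (w k) ^ 2) = w ⬝ᵥ w := by simp [dotProduct, sq]
    rw [hQ, hsplit, Matrix.add_mulVec, dotProduct_add, hww]
    calc u ⬝ᵥ ((Matrix.diagonal (fun s => d s * emph γ P d i s) * (γ • P - 1)) *ᵥ u)
          + u ⬝ᵥ ((Matrix.diagonal δ * (γ • P - 1)) *ᵥ u)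
        ≤ -((lammin - ε * sp) * (u ⬝ᵥ u)) := by
          rw [hT1]
          have := hT2
          nlinarith [hT1le, hT2]
      _ ≤ -((lammin - ε * sp) * (σ * (w ⬝ᵥ w))) := by
          apply neg_le_neg
          exact mul_le_mul_of_nonneg_left (hσle w) (by nlinarith)
      _ = -((lammin - ε * sp) * σ) * (w ⬝ᵥ w) := by ring

end
end

section
/- If γ^{n+1} < κ d_{μ,min} min_s( i(s) d_μ(s) ) / ( d_{μ,max}² ‖I − γP_π^⊤‖_∞ ‖m‖₁ ), where κ := min_s d_μ(s) i(s) / f(s), then for every vector v ∈ ℝ^S, γ ‖P_π v‖_{f_n}² ≤ ‖v‖_{f_n}². -/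
open Matrix Finset

noncomputable section

/-- if
`γ^{n+1} < κ d_min min_s(i(s)d(s)) / (d_max² ‖I − γPᵀ‖_∞ ‖m‖₁)`,
with `κ := min_s d(s)i(s)/f(s)`, then `γ ‖P v‖²_{f_n} ≤ ‖v‖²_{f_n}` for every `v`. -/
theorem truncated_emphasis_weighted_contraction
    {S : Type} [Fintype S] [DecidableEq S]
    (γ : ℝ) (hγ0 : 0 ≤ γ) (hγ1 : γ < 1)
    (P : Matrix S S ℝ) (hP0 : ∀ s s', 0 ≤ P s s') (hP1 : ∀ s, ∑ s', P s s' = 1)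
    (d : S → ℝ) (hd : ∀ s, 0 < d s) (hdsum : ∑ s, d s = 1)
    (i : S → ℝ) (hi : ∀ s, 0 < i s)
    (dmax dmin : ℝ)
    (hdmax : IsGreatest (Set.range d) dmax) (hdmin : IsLeast (Set.range d) dmin)
    (κ : ℝ)
    (hκ : IsLeast (Set.range fun s => d s * i s / (d s * emph γ P d i s)) κ)
    (idmin : ℝ)
    (hidmin : IsLeast (Set.range fun s => i s * d s) idmin)
    (ninf : ℝ)
    (hninf : IsGreatest (Set.range fun s => ∑ s', |(1 - γ • Pᵀ) s s'|) ninf)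
    (n : ℕ)
    (hn : γ ^ (n + 1) < κ * dmin * idmin / (dmax ^ 2 * ninf * ∑ s, |emph γ P d i s|)) :
    ∀ v : S → ℝ,
      γ * ∑ s, (d s * truncEmph γ P d i n s) * (P.mulVec v s) ^ 2 ≤
        ∑ s, (d s * truncEmph γ P d i n s) * (v s) ^ 2 := by
  rcases isEmpty_or_nonempty S with hS | hS
  · intro v; simp
  -- basic powers of P
  have hPk0 : ∀ k (s s' : S), 0 ≤ (P ^ k) s s' := by
    intro k
    induction k with
    | zero => intro s s'; by_cases h : s = s' <;> simp [Matrix.one_apply, h]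
    | succ k ih =>
      intro s s'
      rw [pow_succ, Matrix.mul_apply]
      exact Finset.sum_nonneg fun t _ => mul_nonneg (ih s t) (hP0 t s')
  have hPk1 : ∀ k (s : S), ∑ s', (P ^ k) s s' = 1 := by
    intro k
    induction k with
    | zero => intro s; simp [Matrix.one_apply]
    | succ k ih =>
      intro s
      simp only [pow_succ, Matrix.mul_apply]
      rw [Finset.sum_comm]
      have : ∀ t : S, ∑ s', (P ^ k) s t * P t s' = (P ^ k) s t := by
        intro t; rw [← Finset.mul_sum, hP1 t, mul_one]
      simp_rw [this]
      exact ih s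
  have hPkle : ∀ k (s s' : S), (P ^ k) s s' ≤ 1 := by
    intro k s s'
    calc (P ^ k) s s' ≤ ∑ t, (P ^ k) s t :=
          Finset.single_le_sum (fun t _ => hPk0 k s t) (Finset.mem_univ s')
      _ = 1 := hPk1 k s
  have hPle1 : ∀ s : S, P s s ≤ 1 := by
    intro s; have := hPkle 1 s s; simpa using this
  set di : S → ℝ := fun s => d s * i s with hdidef
  have hdi0 : ∀ s, 0 < di s := fun s => mul_pos (hd s) (hi s)
  set g : ℕ → S → ℝ := fun k => ((Pᵀ) ^ k).mulVec di with hgdef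
  have hgapp : ∀ k (s : S), g k s = ∑ s', (P ^ k) s' s * di s' := by
    intro k s
    simp only [hgdef, Matrix.mulVec, dotProduct, ← Matrix.transpose_pow,
      Matrix.transpose_apply]
  have hg0 : ∀ k s, 0 ≤ g k s := by
    intro k s
    rw [hgapp]
    exact Finset.sum_nonneg fun t _ => mul_nonneg (hPk0 k t s) (hdi0 t).le
  have hgle : ∀ k s, g k s ≤ ∑ s', di s' := by
    intro k s
    rw [hgapp]
    exact Finset.sum_le_sum fun t _ => by
      nlinarith [hPkle k t s, hPk0 k t s, (hdi0 t).le]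
  have hg0eq : ∀ s, g 0 s = di s := by
    intro s; simp [hgdef]
  -- the truncated weighting f_n
  set fn : S → ℝ := fun s => ∑ j ∈ Finset.range (n + 1), γ ^ j * g j s with hfndef
  have hfn_eq : ∀ s, d s * truncEmph γ P d i n s = fn s := by
    intro s
    simp only [truncEmph, hfndef, Finset.mul_sum]
    refine Finset.sum_congr rfl fun j _ => ?_
    have : ((Matrix.diagonal fun s => (d s)⁻¹) * Pᵀ ^ j * Matrix.diagonal d).mulVec i s
        = (d s)⁻¹ * g j s := by
      rw [Matrix.mul_assoc, ← Matrix.mulVec_mulVec, ← Matrix.mulVec_mulVec]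
      have h1 : (Matrix.diagonal d).mulVec i = di := by
        funext t; simp [Matrix.mulVec_diagonal, hdidef]
      rw [h1]
      simp [Matrix.mulVec_diagonal, hgdef]
    rw [this]; field_simp [(hd s).ne']
  have hfn0 : ∀ s, 0 ≤ fn s :=
    fun s => Finset.sum_nonneg fun j _ => mul_nonneg (pow_nonneg hγ0 j) (hg0 j s)
  -- invertibility of B = 1 - γ • Pᵀ
  set B : Matrix S S ℝ := 1 - γ • Pᵀ with hBdef
  have hdet : IsUnit B.det := by
    have hBt : B = (1 - γ • P)ᵀ := by
      simp [hBdef, Matrix.transpose_sub, Matrix.transpose_smul]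
    rw [hBt, Matrix.det_transpose]
    rw [isUnit_iff_ne_zero]
    intro hdz
    obtain ⟨v, hv0, hv⟩ := (Matrix.exists_mulVec_eq_zero_iff).2 hdz
    obtain ⟨s0, -, hs0⟩ := Finset.exists_max_image Finset.univ (fun s => |v s|)
      ⟨Classical.arbitrary S, Finset.mem_univ _⟩
    have hvs : ∀ s, v s = γ * ∑ s', P s s' * v s' := by
      intro s
      have := congrFun hv s
      simp only [Matrix.sub_mulVec, Matrix.one_mulVec, Matrix.smul_mulVec,
        Pi.sub_apply, Pi.smul_apply, smul_eq_mul, Pi.zero_apply] at this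
      have h2 : (P.mulVec v) s = ∑ s', P s s' * v s' := by
        simp [Matrix.mulVec, dotProduct]
      linarith [this, h2.symm ▸ this]
    have hle : |v s0| ≤ γ * |v s0| := by
      calc |v s0| = |γ * ∑ s', P s0 s' * v s'| := by rw [← hvs s0]
        _ = γ * |∑ s', P s0 s' * v s'| := by rw [abs_mul, abs_of_nonneg hγ0]
        _ ≤ γ * ∑ s', |P s0 s' * v s'| :=
            mul_le_mul_of_nonneg_left (Finset.abs_sum_le_sum_abs _ _) hγ0
        _ ≤ γ * ∑ s', P s0 s' * |v s0| := by
            refine mul_le_mul_of_nonneg_left (Finset.sum_le_sum fun t _ => ?_) hγ0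
            rw [abs_mul, abs_of_nonneg (hP0 s0 t)]
            exact mul_le_mul_of_nonneg_left (hs0 t (Finset.mem_univ t)) (hP0 s0 t)
        _ = γ * |v s0| := by rw [← Finset.sum_mul, hP1 s0, one_mul]
    have hv00 : |v s0| = 0 := by nlinarith [abs_nonneg (v s0)]
    apply hv0
    funext s
    have := hs0 s (Finset.mem_univ s)
    rw [hv00] at this
    exact abs_nonpos_iff.mp this
  -- the weighting f
  set f : S → ℝ := B⁻¹.mulVec di with hfdef
  have hfemph : ∀ s, d s * emph γ P d i s = f s := by
    intro s
    simp only [emph, hfdef]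
    rw [Matrix.mul_assoc, ← Matrix.mulVec_mulVec, ← Matrix.mulVec_mulVec]
    have h1 : (Matrix.diagonal d).mulVec i = di := by
      funext t; simp [Matrix.mulVec_diagonal, hdidef]
    rw [h1]
    simp only [Matrix.mulVec_diagonal]
    field_simp [(hd s).ne']
    rfl
  have hBf : B.mulVec f = di := by
    rw [hfdef, Matrix.mulVec_mulVec, Matrix.mul_nonsing_inv _ hdet, Matrix.one_mulVec]
  have hfix : f = fun s => di s + γ * (Pᵀ.mulVec f) s := by
    funext s
    have := congrFun hBf s
    simp only [hBdef, Matrix.sub_mulVec, Matrix.one_mulVec, Matrix.smul_mulVec,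
      Pi.sub_apply, Pi.smul_apply, smul_eq_mul] at this
    linarith
  clear_value B f
  have hexp : ∀ k (s : S), f s
      = (∑ j ∈ Finset.range (k + 1), γ ^ j * g j s)
        + γ ^ (k + 1) * (((Pᵀ) ^ (k + 1)).mulVec f) s := by
    intro k
    induction k with
    | zero =>
      intro s
      have := congrFun hfix s
      simpa [hg0eq, pow_one] using this
    | succ k ih =>
      intro s
      rw [ih s]
      have hmv : (((Pᵀ) ^ (k + 1)).mulVec f) s
          = g (k + 1) s + γ * (((Pᵀ) ^ (k + 2)).mulVec f) s := by
        conv_lhs => rw [hfix]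
        have : ((Pᵀ) ^ (k + 1)).mulVec (fun s => di s + γ * (Pᵀ.mulVec f) s)
            = ((Pᵀ) ^ (k + 1)).mulVec di + γ • ((Pᵀ) ^ (k + 1)).mulVec (Pᵀ.mulVec f) := by
          have : (fun s => di s + γ * (Pᵀ.mulVec f) s) = di + γ • (Pᵀ.mulVec f) := by
            funext t; simp
          rw [this, Matrix.mulVec_add, Matrix.mulVec_smul]
        rw [this]
        simp only [Pi.add_apply, Pi.smul_apply, smul_eq_mul]
        congr 2
        rw [Matrix.mulVec_mulVec, ← pow_succ]
      rw [hmv, Finset.sum_range_succ (fun j => γ ^ j * g j s) (k + 1)]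
      ring
  -- f ≥ di
  have hfge : ∀ s, di s ≤ f s := by
    intro s
    set C : ℝ := ∑ s', |f s'| with hCdef
    have hC0 : 0 ≤ C := Finset.sum_nonneg fun t _ => abs_nonneg _
    have hbound : ∀ k : ℕ, di s ≤ f s + γ ^ (k + 1) * C := by
      intro k
      have h1 := hexp k s
      have h2 : di s ≤ ∑ j ∈ Finset.range (k + 1), γ ^ j * g j s := by
        have := Finset.single_le_sum
          (f := fun j => γ ^ j * g j s)
          (fun j _ => mul_nonneg (pow_nonneg hγ0 j) (hg0 j s))
          (Finset.mem_range.2 (Nat.succ_pos k))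
        simpa [hg0eq] using this
      have h3 : -C ≤ (((Pᵀ) ^ (k + 1)).mulVec f) s := by
        have : |(((Pᵀ) ^ (k + 1)).mulVec f) s| ≤ C := by
          have happ : (((Pᵀ) ^ (k + 1)).mulVec f) s = ∑ t, (P ^ (k + 1)) t s * f t := by
            simp only [Matrix.mulVec, dotProduct, ← Matrix.transpose_pow,
              Matrix.transpose_apply]
          rw [happ]
          calc |∑ t, (P ^ (k + 1)) t s * f t| ≤ ∑ t, |(P ^ (k + 1)) t s * f t| :=
                Finset.abs_sum_le_sum_abs _ _
            _ ≤ ∑ t, |f t| := by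
                refine Finset.sum_le_sum fun t _ => ?_
                rw [abs_mul, abs_of_nonneg (hPk0 _ t s)]
                nlinarith [hPkle (k + 1) t s, hPk0 (k + 1) t s, abs_nonneg (f t)]
        linarith [neg_abs_le ((((Pᵀ) ^ (k + 1)).mulVec f) s), this]
      nlinarith [pow_nonneg hγ0 (k + 1), h3, mul_le_mul_of_nonneg_left h3 (pow_nonneg hγ0 (k+1))]
    refine ge_of_tendsto' (x := Filter.atTop) (f := fun k : ℕ => f s + γ ^ (k + 1) * C) ?_ hbound
    have h1 : Filter.Tendsto (fun k : ℕ => γ ^ (k + 1)) Filter.atTop (nhds 0) :=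
      (tendsto_pow_atTop_nhds_zero_of_lt_one hγ0 hγ1).comp (Filter.tendsto_add_atTop_nat 1)
    have := ((h1.mul_const C).const_add (f s))
    simpa using this
  have hf0 : ∀ s, 0 < f s := fun s => lt_of_lt_of_le (hdi0 s) (hfge s)
  -- κ > 0 and κ ≤ ninf
  have hκ0 : 0 < κ := by
    obtain ⟨s0, hs0⟩ := hκ.1
    rw [← hs0]
    simp only [hfemph s0]
    exact div_pos (hdi0 s0) (hf0 s0)
  have hκninf : κ ≤ ninf := by
    obtain ⟨sM, -, hsM⟩ := Finset.exists_max_image Finset.univ f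
      ⟨Classical.arbitrary S, Finset.mem_univ _⟩
    have h1 : κ ≤ di sM / f sM := by
      have := hκ.2 ⟨sM, rfl⟩
      simpa [hfemph sM, hdidef] using this
    have h2 : di sM ≤ ninf * f sM := by
      have hBfs := congrFun hBf sM
      have happ : (B.mulVec f) sM = ∑ t, B sM t * f t := by
        simp [Matrix.mulVec, dotProduct]
      rw [happ] at hBfs
      calc di sM = ∑ t, B sM t * f t := hBfs.symm
        _ ≤ ∑ t, |B sM t| * f t :=
            Finset.sum_le_sum fun t _ =>
              mul_le_mul_of_nonneg_right (le_abs_self _) (hf0 t).le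
        _ ≤ ∑ t, |B sM t| * f sM :=
            Finset.sum_le_sum fun t _ =>
              mul_le_mul_of_nonneg_left (hsM t (Finset.mem_univ t)) (abs_nonneg _)
        _ = (∑ t, |B sM t|) * f sM := by rw [Finset.sum_mul]
        _ ≤ ninf * f sM :=
            mul_le_mul_of_nonneg_right (hninf.2 ⟨sM, rfl⟩) (hf0 sM).le
    calc κ ≤ di sM / f sM := h1
      _ ≤ ninf := by rw [div_le_iff₀ (hf0 sM)]; linarith
  -- positivity of parameters
  have hdmax0 : 0 < dmax := by
    obtain ⟨s0, hs0⟩ := hdmax.1; rw [← hs0]; exact hd s0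
  have hdmin0 : 0 < dmin := by
    obtain ⟨s0, hs0⟩ := hdmin.1; rw [← hs0]; exact hd s0
  have hidmin0 : 0 < idmin := by
    obtain ⟨s0, hs0⟩ := hidmin.1; rw [← hs0]; exact mul_pos (hi s0) (hd s0)
  have hninf0 : 0 < ninf := by
    set s0 := Classical.arbitrary S
    have h1 : 1 - γ ≤ ∑ t, |B s0 t| := by
      have hd1 : |B s0 s0| = 1 - γ * P s0 s0 := by
        have : B s0 s0 = 1 - γ * P s0 s0 := by
          simp [hBdef, Matrix.one_apply, Matrix.sub_apply]
        rw [this, abs_of_nonneg]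
        nlinarith [hP0 s0 s0, hPle1 s0]
      calc 1 - γ ≤ 1 - γ * P s0 s0 := by nlinarith [hP0 s0 s0, hPle1 s0]
        _ = |B s0 s0| := hd1.symm
        _ ≤ ∑ t, |B s0 t| :=
            Finset.single_le_sum (f := fun t => |B s0 t|) (fun t _ => abs_nonneg _)
              (Finset.mem_univ s0)
    have := hninf.2 ⟨s0, rfl⟩
    linarith
  set M : ℝ := ∑ s, |emph γ P d i s| with hMdef
  clear_value M
  have hemphpos : ∀ s, 0 < emph γ P d i s := by
    intro s
    have := hfemph s
    nlinarith [hf0 s, hd s]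
  have hM0 : 0 < M := by
    rw [hMdef]
    refine Finset.sum_pos (fun t _ => abs_pos.2 (hemphpos t).ne') ⟨Classical.arbitrary S, Finset.mem_univ _⟩
  have hdiM : ∑ s, di s ≤ dmax * M := by
    rw [hMdef, Finset.mul_sum]
    refine Finset.sum_le_sum fun t _ => ?_
    have h1 : di t ≤ f t := hfge t
    have h2 : f t = d t * emph γ P d i t := (hfemph t).symm
    have h3 : |emph γ P d i t| = emph γ P d i t := abs_of_pos (hemphpos t)
    have h4 : d t ≤ dmax := hdmax.2 ⟨t, rfl⟩
    rw [h3]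
    nlinarith [hemphpos t, hd t]
  -- the key inequality
  have hkey : ∀ s, γ ^ (n + 1) * g (n + 1) s ≤ di s := by
    have hchain : γ ^ (n + 1) * (dmax * M) ≤ idmin := by
      have hden : 0 < dmax ^ 2 * ninf * M := by positivity
      have h1 : γ ^ (n + 1) * (dmax ^ 2 * ninf * M) < κ * dmin * idmin :=
        (lt_div_iff₀ hden).mp hn
      have hdmindmax : dmin ≤ dmax := by
        obtain ⟨s0, hs0⟩ := hdmin.1
        rw [← hs0]; exact hdmax.2 ⟨s0, rfl⟩
      have h2 : κ * dmin ≤ ninf * dmax := by nlinarith [hκninf, hκ0, hdmin0, hninf0]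
      have h3 : κ * dmin * idmin ≤ ninf * dmax * idmin := by nlinarith
      have h4 : γ ^ (n + 1) * (dmax ^ 2 * ninf * M) < ninf * dmax * idmin :=
        lt_of_lt_of_le h1 h3
      have h5 : ninf * dmax * (γ ^ (n + 1) * (dmax * M)) < ninf * dmax * idmin := by
        have e : ninf * dmax * (γ ^ (n + 1) * (dmax * M))
            = γ ^ (n + 1) * (dmax ^ 2 * ninf * M) := by ring
        rw [e]; exact h4
      exact le_of_lt (lt_of_mul_lt_mul_left h5 (by positivity : (0:ℝ) ≤ ninf * dmax))
    intro s
    have h5 : γ ^ (n + 1) * g (n + 1) s ≤ γ ^ (n + 1) * ∑ s', di s' :=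
      mul_le_mul_of_nonneg_left (hgle (n + 1) s) (pow_nonneg hγ0 (n + 1))
    have h6 : γ ^ (n + 1) * ∑ s', di s' ≤ γ ^ (n + 1) * (dmax * M) :=
      mul_le_mul_of_nonneg_left hdiM (pow_nonneg hγ0 (n + 1))
    have h7 : idmin ≤ di s := by
      have h : idmin ≤ i s * d s := hidmin.2 ⟨s, rfl⟩
      show idmin ≤ d s * i s
      linarith [mul_comm (i s) (d s), h]
    linarith
  -- main computation
  intro v
  simp only [hfn_eq]
  have jensen : ∀ s, (P.mulVec v s) ^ 2 ≤ ∑ s', P s s' * (v s') ^ 2 := by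
    intro s
    have h := Finset.sum_mul_sq_le_sq_mul_sq Finset.univ
      (fun s' => Real.sqrt (P s s')) (fun s' => Real.sqrt (P s s') * v s')
    have e1 : ∀ s', Real.sqrt (P s s') * (Real.sqrt (P s s') * v s') = P s s' * v s' := by
      intro s'
      rw [← mul_assoc, Real.mul_self_sqrt (hP0 s s')]
    have e2 : ∀ s', Real.sqrt (P s s') ^ 2 = P s s' := fun s' => Real.sq_sqrt (hP0 s s')
    have e3 : ∀ s', (Real.sqrt (P s s') * v s') ^ 2 = P s s' * (v s') ^ 2 := by
      intro s'; rw [mul_pow, e2]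
    simp only [e1, e3] at h
    have e4 : (∑ s', Real.sqrt (P s s') ^ 2) = 1 := by
      simp only [e2]; exact hP1 s
    rw [e4, one_mul] at h
    have : P.mulVec v s = ∑ s', P s s' * v s' := by simp [Matrix.mulVec, dotProduct]
    rw [this]
    exact h
  have step1 : γ * ∑ s, fn s * (P.mulVec v s) ^ 2
      ≤ γ * ∑ s, fn s * ∑ s', P s s' * (v s') ^ 2 := by
    refine mul_le_mul_of_nonneg_left (Finset.sum_le_sum fun s _ => ?_) hγ0
    exact mul_le_mul_of_nonneg_left (jensen s) (hfn0 s)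
  have step2 : γ * ∑ s, fn s * ∑ s', P s s' * (v s') ^ 2
      = ∑ s', (γ * (Pᵀ.mulVec fn) s') * (v s') ^ 2 := by
    have e : ∀ s', (Pᵀ.mulVec fn) s' = ∑ s, P s s' * fn s := by
      intro s'
      simp [Matrix.mulVec, dotProduct, Matrix.transpose_apply]
    calc γ * ∑ s, fn s * ∑ s', P s s' * (v s') ^ 2
        = ∑ s, ∑ s', γ * (P s s' * fn s) * (v s') ^ 2 := by
          rw [Finset.mul_sum]
          refine Finset.sum_congr rfl fun s _ => ?_
          rw [Finset.mul_sum, Finset.mul_sum]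
          refine Finset.sum_congr rfl fun s' _ => by ring
      _ = ∑ s', ∑ s, γ * (P s s' * fn s) * (v s') ^ 2 := Finset.sum_comm
      _ = ∑ s', (γ * (Pᵀ.mulVec fn) s') * (v s') ^ 2 := by
          refine Finset.sum_congr rfl fun s' _ => ?_
          rw [e s', Finset.mul_sum, Finset.sum_mul]
  have hPtfn : ∀ s', (Pᵀ.mulVec fn) s' = ∑ j ∈ Finset.range (n + 1), γ ^ j * g (j + 1) s' := by
    intro s'
    have h1 : (Pᵀ.mulVec fn) s' = ∑ t, Pᵀ s' t * fn t := by
      simp [Matrix.mulVec, dotProduct]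
    rw [h1]
    simp only [hfndef, Finset.mul_sum]
    rw [Finset.sum_comm]
    refine Finset.sum_congr rfl fun j _ => ?_
    have h2 : g (j + 1) s' = ∑ t, Pᵀ s' t * g j t := by
      have h3 : ((Pᵀ) ^ (j + 1)).mulVec di = Pᵀ.mulVec (((Pᵀ) ^ j).mulVec di) := by
        rw [Matrix.mulVec_mulVec, ← pow_succ']
      simp only [hgdef, h3, Matrix.mulVec, dotProduct]
    rw [h2, Finset.mul_sum]
    refine Finset.sum_congr rfl fun t _ => by ring
  have step3 : ∀ s', γ * (Pᵀ.mulVec fn) s' ≤ fn s' := by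
    intro s'
    rw [hPtfn s']
    have h1 : γ * ∑ j ∈ Finset.range (n + 1), γ ^ j * g (j + 1) s'
        = ∑ j ∈ Finset.range (n + 1), γ ^ (j + 1) * g (j + 1) s' := by
      rw [Finset.mul_sum]
      refine Finset.sum_congr rfl fun j _ => by ring
    rw [h1]
    have h2 := Finset.sum_range_succ' (fun j => γ ^ j * g j s') (n + 1)
    have h3 := Finset.sum_range_succ (fun j => γ ^ j * g j s') (n + 1)
    have h4 := hkey s'
    have h5 : fn s' = ∑ j ∈ Finset.range (n + 1), γ ^ j * g j s' := rfl
    simp only [pow_zero, one_mul, hg0eq] at h2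
    rw [h2] at h3
    rw [h5]
    linarith
  calc γ * ∑ s, fn s * (P.mulVec v s) ^ 2
      ≤ γ * ∑ s, fn s * ∑ s', P s s' * (v s') ^ 2 := step1
    _ = ∑ s', (γ * (Pᵀ.mulVec fn) s') * (v s') ^ 2 := step2
    _ ≤ ∑ s', fn s' * (v s') ^ 2 :=
        Finset.sum_le_sum fun s' _ =>
          mul_le_mul_of_nonneg_right (step3 s') (sq_nonneg _)


end
end

section
/- If γ^{n+1} < κ d_{μ,min} min_s( i(s) d_μ(s) ) / ( d_{μ,max}² ‖I − γP_π^⊤‖_∞ ‖m‖₁ ), where κ := min_s d_μ(s) i(s) / f(s), the feature matrix X has full column rank, and w_{*,n} satisfies Π_{f_n} T_π (X w_{*,n}) = X w_{*,n}, then ‖X w_{*,n} − v_π‖_{f_n} ≤ (1/√(1−γ)) ‖Π_{f_n} v_π − v_π‖_{f_n}, where v_π := (I − γP_π)^{-1} r_π is the value function of the target policy (the unique fixed point of T_π). -/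
open Matrix Finset

noncomputable section

private lemma aux_quad_zero {B C : ℝ} (hC : 0 ≤ C)
    (h : ∀ t : ℝ, 0 ≤ t ^ 2 * C + 2 * t * B) : B = 0 := by
  rcases eq_or_lt_of_le hC with hC0 | hCpos
  · have h1 := h (-B)
    rw [← hC0] at h1
    nlinarith [sq_nonneg B]
  · have h1 := h (-(B / C))
    have h3 : (-(B / C)) ^ 2 * C + 2 * (-(B / C)) * B = -(B ^ 2 / C) := by
      field_simp; ring
    rw [h3] at h1
    have h4 : B ^ 2 / C ≤ 0 := by linarith
    have h5 : B ^ 2 ≤ 0 := by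
      by_contra h6
      push_neg at h6
      exact absurd (div_pos h6 hCpos) (not_lt.mpr h4)
    nlinarith [sq_nonneg B]

private lemma aux_CS {S : Type} [Fintype S] (F a b : S → ℝ) (hF : ∀ s, 0 ≤ F s) :
    (∑ s, F s * (a s * b s)) ^ 2 ≤ (∑ s, F s * a s ^ 2) * (∑ s, F s * b s ^ 2) := by
  have h := Finset.sum_mul_sq_le_sq_mul_sq Finset.univ
    (fun s => Real.sqrt (F s) * a s) (fun s => Real.sqrt (F s) * b s)
  have e1 : ∀ s : S, (Real.sqrt (F s) * a s) * (Real.sqrt (F s) * b s) = F s * (a s * b s) := by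
    intro s
    rw [show (Real.sqrt (F s) * a s) * (Real.sqrt (F s) * b s)
        = (Real.sqrt (F s) * Real.sqrt (F s)) * (a s * b s) by ring,
      Real.mul_self_sqrt (hF s)]
  have e2 : ∀ s : S, (Real.sqrt (F s) * a s) ^ 2 = F s * a s ^ 2 := by
    intro s; rw [mul_pow, Real.sq_sqrt (hF s)]
  have e3 : ∀ s : S, (Real.sqrt (F s) * b s) ^ 2 = F s * b s ^ 2 := by
    intro s; rw [mul_pow, Real.sq_sqrt (hF s)]
  simp only [e1, e2, e3] at h
  exact h



variable {S : Type} [Fintype S] [DecidableEq S]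

private lemma aux_pow_nonneg {P : Matrix S S ℝ} (hP0 : ∀ s s', 0 ≤ P s s') (j : ℕ) :
    ∀ s s', 0 ≤ (P ^ j) s s' := by
  induction j with
  | zero => intro s s'; simp [Matrix.one_apply]; split <;> norm_num
  | succ k ih =>
    intro s s'
    rw [pow_succ, Matrix.mul_apply]
    exact Finset.sum_nonneg fun k' _ => mul_nonneg (ih s k') (hP0 k' s')

private lemma aux_pow_rowsum {P : Matrix S S ℝ} (hP1 : ∀ s, ∑ s', P s s' = 1) (j : ℕ) :
    ∀ s, ∑ s', (P ^ j) s s' = 1 := by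
  induction j with
  | zero => intro s; simp [Matrix.one_apply]
  | succ k ih =>
    intro s
    simp only [pow_succ, Matrix.mul_apply]
    rw [Finset.sum_comm]
    calc ∑ k' : S, ∑ s' : S, (P ^ k) s k' * P k' s'
        = ∑ k' : S, (P ^ k) s k' * ∑ s', P k' s' := by
          simp [Finset.mul_sum]
      _ = 1 := by simp only [hP1]; simpa using ih s

private lemma aux_pow_le_one {P : Matrix S S ℝ} (hP0 : ∀ s s', 0 ≤ P s s')
    (hP1 : ∀ s, ∑ s', P s s' = 1) (j : ℕ) : ∀ s s', (P ^ j) s s' ≤ 1 := by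
  intro s s'
  calc (P ^ j) s s' ≤ ∑ t, (P ^ j) s t :=
        Finset.single_le_sum (fun t _ => aux_pow_nonneg hP0 j s t) (Finset.mem_univ s')
    _ = 1 := aux_pow_rowsum hP1 j s

private lemma aux_isUnit {γ : ℝ} (hγ0 : 0 ≤ γ) (hγ1 : γ < 1)
    {P : Matrix S S ℝ} (hP0 : ∀ s s', 0 ≤ P s s') (hP1 : ∀ s, ∑ s', P s s' = 1) :
    IsUnit (1 - γ • P) := by
  rw [← Matrix.mulVec_injective_iff_isUnit]
  intro u v huv
  rw [← sub_eq_zero]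
  set x : S → ℝ := u - v with hxd
  have hx : (1 - γ • P).mulVec x = 0 := by
    rw [hxd, Matrix.mulVec_sub, huv, sub_self]
  cases isEmpty_or_nonempty S with
  | inl h => funext s; exact (h.false s).elim
  | inr h =>
    have hx' : ∀ s, x s = γ * (P.mulVec x) s := by
      intro s
      have := congrFun hx s
      rw [Matrix.sub_mulVec, Matrix.one_mulVec, Matrix.smul_mulVec] at this
      have : x s - γ * (P.mulVec x) s = 0 := this
      linarith
    obtain ⟨s0, _, hs0⟩ := Finset.exists_max_image Finset.univ (fun s => |x s|)
      ⟨Classical.arbitrary S, Finset.mem_univ _⟩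
    have hbound : |x s0| ≤ γ * |x s0| := by
      calc |x s0| = γ * |(P.mulVec x) s0| := by rw [hx' s0, abs_mul, abs_of_nonneg hγ0]
        _ ≤ γ * ∑ s', P s0 s' * |x s'| := by
            apply mul_le_mul_of_nonneg_left _ hγ0
            calc |(P.mulVec x) s0| ≤ ∑ s', |P s0 s' * x s'| :=
                  Finset.abs_sum_le_sum_abs _ _
              _ = ∑ s', P s0 s' * |x s'| := by
                  apply Finset.sum_congr rfl; intro s' _
                  rw [abs_mul, abs_of_nonneg (hP0 s0 s')]
        _ ≤ γ * ∑ s', P s0 s' * |x s0| := by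
            apply mul_le_mul_of_nonneg_left _ hγ0
            apply Finset.sum_le_sum; intro s' _
            exact mul_le_mul_of_nonneg_left (hs0 s' (Finset.mem_univ s')) (hP0 s0 s')
        _ = γ * |x s0| := by rw [← Finset.sum_mul, hP1 s0, one_mul]
    have hzero : |x s0| = 0 := by nlinarith [abs_nonneg (x s0)]
    funext s
    have : |x s| ≤ 0 := hzero ▸ hs0 s (Finset.mem_univ s)
    exact abs_eq_zero.mp (le_antisymm this (abs_nonneg _))

private lemma aux_inv_nonneg {γ : ℝ} (hγ0 : 0 ≤ γ) (hγ1 : γ < 1)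
    {P : Matrix S S ℝ} (hP0 : ∀ s s', 0 ≤ P s s') (hP1 : ∀ s, ∑ s', P s s' = 1) :
    ∀ s c, (1 : Matrix S S ℝ) s c ≤ ((1 - γ • P)⁻¹) s c ∧ 0 ≤ ((1 - γ • P)⁻¹) s c := by
  intro s c
  have hU := aux_isUnit hγ0 hγ1 hP0 hP1
  set A := 1 - γ • P with hA
  set x : S → ℝ := A⁻¹.mulVec (Pi.single c 1) with hxdef
  have hAx : A.mulVec x = Pi.single c 1 := by
    rw [hxdef, Matrix.mulVec_mulVec, Matrix.mul_nonsing_inv _ ((Matrix.isUnit_iff_isUnit_det _).mp hU),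
      Matrix.one_mulVec]
  have hxs : ∀ t, x t = (if t = c then (1:ℝ) else 0) + γ * (P.mulVec x) t := by
    intro t
    have := congrFun hAx t
    rw [hA, Matrix.sub_mulVec, Matrix.one_mulVec, Matrix.smul_mulVec] at this
    simp only [Pi.sub_apply, Pi.smul_apply, smul_eq_mul, Pi.single_apply] at this
    linarith
  have hxnonneg : ∀ t, 0 ≤ x t := by
    cases isEmpty_or_nonempty S with
    | inl h => exact fun t => (h.false t).elim
    | inr h =>
      obtain ⟨t0, _, ht0⟩ := Finset.exists_min_image Finset.univ x
        ⟨Classical.arbitrary S, Finset.mem_univ _⟩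
      have hPx : x t0 ≤ (P.mulVec x) t0 → True := fun _ => trivial
      have hge : (P.mulVec x) t0 ≥ x t0 := by
        calc (P.mulVec x) t0 = ∑ s', P t0 s' * x s' := rfl
          _ ≥ ∑ s', P t0 s' * x t0 := by
              apply Finset.sum_le_sum; intro s' _
              exact mul_le_mul_of_nonneg_left (ht0 s' (Finset.mem_univ s')) (hP0 t0 s')
          _ = x t0 := by rw [← Finset.sum_mul, hP1 t0, one_mul]
      have ht0nonneg : 0 ≤ x t0 := by
        by_contra hneg
        push_neg at hneg
        have hsingle : (if t0 = c then (1:ℝ) else 0) ≥ (0:ℝ) := by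
          split <;> norm_num
        have hh := hxs t0
        nlinarith [mul_le_mul_of_nonneg_left hge hγ0]
      intro t
      exact le_trans ht0nonneg (ht0 t (Finset.mem_univ t))
  have hx1 : (if s = c then (1:ℝ) else 0) ≤ x s := by
    rw [hxs s]
    have : 0 ≤ γ * (P.mulVec x) s := by
      apply mul_nonneg hγ0
      exact Finset.sum_nonneg fun s' _ => mul_nonneg (hP0 s s') (hxnonneg s')
    linarith
  have hxc : x s = A⁻¹ s c := by
    rw [hxdef]
    simp [Matrix.mulVec_single]
  constructor
  · rw [← hxc, Matrix.one_apply]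
    exact hx1
  · rw [← hxc]; exact hxnonneg s


/-- under the truncation-length condition of Lemma 6, full column rank of
`X`, and `Π_{f_n} T_π (X w_{*,n}) = X w_{*,n}`, we have
`‖X w_{*,n} − v_π‖_{f_n} ≤ (1/√(1−γ)) ‖Π_{f_n} v_π − v_π‖_{f_n}`,
where `v_π = (I − γP)⁻¹ r_π`. -/
theorem truncated_etd_fixed_point_performance
    {S : Type} [Fintype S] [DecidableEq S] {K : ℕ}
    (γ : ℝ) (hγ0 : 0 ≤ γ) (hγ1 : γ < 1)
    (P : Matrix S S ℝ) (hP0 : ∀ s s', 0 ≤ P s s') (hP1 : ∀ s, ∑ s', P s s' = 1)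
    (d : S → ℝ) (hd : ∀ s, 0 < d s) (hdsum : ∑ s, d s = 1)
    (i : S → ℝ) (hi : ∀ s, 0 < i s)
    (dmax dmin : ℝ)
    (hdmax : IsGreatest (Set.range d) dmax) (hdmin : IsLeast (Set.range d) dmin)
    (κ : ℝ)
    (hκ : IsLeast (Set.range fun s => d s * i s / (d s * emph γ P d i s)) κ)
    (idmin : ℝ)
    (hidmin : IsLeast (Set.range fun s => i s * d s) idmin)
    (ninf : ℝ)
    (hninf : IsGreatest (Set.range fun s => ∑ s', |(1 - γ • Pᵀ) s s'|) ninf)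
    (n : ℕ)
    (hn : γ ^ (n + 1) < κ * dmin * idmin / (dmax ^ 2 * ninf * ∑ s, |emph γ P d i s|))
    (X : Matrix S (Fin K) ℝ) (hX : Function.Injective X.mulVec)
    (rπ : S → ℝ)
    (Proj : (S → ℝ) → (S → ℝ))
    (hProj : ∀ v : S → ℝ,
      (∃ w : Fin K → ℝ, Proj v = X.mulVec w) ∧
      ∀ w : Fin K → ℝ,
        ∑ s, (d s * truncEmph γ P d i n s) * (Proj v s - v s) ^ 2 ≤
          ∑ s, (d s * truncEmph γ P d i n s) * (X.mulVec w s - v s) ^ 2)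
    (wstar : Fin K → ℝ)
    (hfix : Proj (fun s => rπ s + γ * P.mulVec (X.mulVec wstar) s) = X.mulVec wstar) :
    Real.sqrt (∑ s, (d s * truncEmph γ P d i n s) *
        (X.mulVec wstar s - ((1 - γ • P)⁻¹).mulVec rπ s) ^ 2) ≤
      (1 / Real.sqrt (1 - γ)) *
        Real.sqrt (∑ s, (d s * truncEmph γ P d i n s) *
          (Proj (((1 - γ • P)⁻¹).mulVec rπ) s - ((1 - γ • P)⁻¹).mulVec rπ s) ^ 2) := by
  -- Nonemptiness
  have hSne : Nonempty S := by
    cases isEmpty_or_nonempty S with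
    | inl h => simp [Finset.univ_eq_empty] at hdsum
    | inr h => exact h
  -- units
  have hU : IsUnit (1 - γ • P) := aux_isUnit hγ0 hγ1 hP0 hP1
  have hUdet : IsUnit (1 - γ • P).det := (Matrix.isUnit_iff_isUnit_det _).mp hU
  have hTe : (1 - γ • Pᵀ) = (1 - γ • P)ᵀ := by
    rw [Matrix.transpose_sub, Matrix.transpose_smul, Matrix.transpose_one]
  have hUT : IsUnit (1 - γ • Pᵀ) := by rw [hTe, Matrix.isUnit_transpose]; exact hU
  have hUTdet : IsUnit (1 - γ • Pᵀ).det := (Matrix.isUnit_iff_isUnit_det _).mp hUT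
  have hinv := aux_inv_nonneg hγ0 hγ1 hP0 hP1
  have hinvT : (1 - γ • Pᵀ)⁻¹ = ((1 - γ • P)⁻¹)ᵀ := by
    rw [hTe, ← Matrix.transpose_nonsing_inv]
  -- basic vector di
  set di : S → ℝ := fun s => d s * i s with hdidef
  have hdipos : ∀ s, 0 < di s := fun s => mul_pos (hd s) (hi s)
  have hDdi : (Matrix.diagonal d).mulVec i = di := by
    funext s; rw [Matrix.mulVec_diagonal]
  -- emph formula
  have hemph : ∀ s, emph γ P d i s = (d s)⁻¹ * (((1 - γ • Pᵀ)⁻¹).mulVec di) s := by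
    intro s
    show (((Matrix.diagonal fun s => (d s)⁻¹) * (1 - γ • Pᵀ)⁻¹ * Matrix.diagonal d).mulVec i) s
        = _
    rw [← Matrix.mulVec_mulVec, ← Matrix.mulVec_mulVec, hDdi, Matrix.mulVec_diagonal]
  have hdm : ∀ s, d s * emph γ P d i s = (((1 - γ • Pᵀ)⁻¹).mulVec di) s := by
    intro s
    rw [hemph s, ← mul_assoc, mul_inv_cancel₀ (hd s).ne', one_mul]
  -- emph lower bound : i ≤ emph
  have hmge : ∀ s, i s ≤ emph γ P d i s := by
    intro s
    have hterm : ∀ s', 0 ≤ ((1 - γ • Pᵀ)⁻¹) s s' * di s' := by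
      intro s'
      apply mul_nonneg _ (hdipos s').le
      rw [hinvT]
      exact (hinv s' s).2
    have hsum : di s ≤ (((1 - γ • Pᵀ)⁻¹).mulVec di) s := by
      have h1 : di s ≤ ((1 - γ • Pᵀ)⁻¹) s s * di s := by
        have : (1 : ℝ) ≤ ((1 - γ • Pᵀ)⁻¹) s s := by
          rw [hinvT]
          have := (hinv s s).1
          simpa [Matrix.one_apply] using this
        nlinarith [hdipos s]
      calc di s ≤ ((1 - γ • Pᵀ)⁻¹) s s * di s := h1
        _ ≤ ∑ s', ((1 - γ • Pᵀ)⁻¹) s s' * di s' :=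
            Finset.single_le_sum (fun s' _ => hterm s') (Finset.mem_univ s)
        _ = (((1 - γ • Pᵀ)⁻¹).mulVec di) s := rfl
    have := mul_le_mul_of_nonneg_left hsum (inv_nonneg.mpr (hd s).le)
    rw [hemph s]
    calc i s = (d s)⁻¹ * di s := by
          simp only [hdidef]
          rw [← mul_assoc, inv_mul_cancel₀ (hd s).ne', one_mul]
      _ ≤ (d s)⁻¹ * (((1 - γ • Pᵀ)⁻¹).mulVec di) s := this
  have hmpos : ∀ s, 0 < emph γ P d i s := fun s => lt_of_lt_of_le (hi s) (hmge s)
  -- identity (1-γPᵀ) (d·m) = di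
  have hBg : (1 - γ • Pᵀ).mulVec (fun s => d s * emph γ P d i s) = di := by
    have : (fun s => d s * emph γ P d i s) = ((1 - γ • Pᵀ)⁻¹).mulVec di := by
      funext s; exact hdm s
    rw [this, Matrix.mulVec_mulVec, Matrix.mul_nonsing_inv _ hUTdet, Matrix.one_mulVec]
  -- κ ≤ ninf
  have hκ_le_ninf : κ ≤ ninf := by
    obtain ⟨t0, _, ht0⟩ := Finset.exists_max_image Finset.univ
      (fun s => d s * emph γ P d i s) ⟨Classical.arbitrary S, Finset.mem_univ _⟩
    have hg0 : 0 < d t0 * emph γ P d i t0 := mul_pos (hd t0) (hmpos t0)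
    have hrow : ∑ s', |(1 - γ • Pᵀ) t0 s'| ≤ ninf := hninf.2 (Set.mem_range_self t0)
    have h1 : di t0 ≤ ninf * (d t0 * emph γ P d i t0) := by
      have h2 : di t0 = ∑ s', (1 - γ • Pᵀ) t0 s' * (d s' * emph γ P d i s') :=
        (congrFun hBg t0).symm
      rw [h2]
      calc ∑ s', (1 - γ • Pᵀ) t0 s' * (d s' * emph γ P d i s')
          ≤ ∑ s', |(1 - γ • Pᵀ) t0 s'| * (d t0 * emph γ P d i t0) := by
            apply Finset.sum_le_sum
            intro s' _
            have hgs : 0 ≤ d s' * emph γ P d i s' := (mul_pos (hd s') (hmpos s')).le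
            calc (1 - γ • Pᵀ) t0 s' * (d s' * emph γ P d i s')
                ≤ |(1 - γ • Pᵀ) t0 s'| * (d s' * emph γ P d i s') :=
                  mul_le_mul_of_nonneg_right (le_abs_self _) hgs
              _ ≤ |(1 - γ • Pᵀ) t0 s'| * (d t0 * emph γ P d i t0) :=
                  mul_le_mul_of_nonneg_left (ht0 s' (Finset.mem_univ s')) (abs_nonneg _)
        _ = (∑ s', |(1 - γ • Pᵀ) t0 s'|) * (d t0 * emph γ P d i t0) := by
            rw [Finset.sum_mul]
        _ ≤ ninf * (d t0 * emph γ P d i t0) :=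
            mul_le_mul_of_nonneg_right hrow hg0.le
    have hκle : κ ≤ di t0 / (d t0 * emph γ P d i t0) := hκ.2 (Set.mem_range_self t0)
    calc κ ≤ di t0 / (d t0 * emph γ P d i t0) := hκle
      _ ≤ ninf := by rw [div_le_iff₀ hg0]; linarith [h1]
  -- positivity facts
  have hκpos : 0 < κ := by
    obtain ⟨s0, hs0⟩ := hκ.1
    rw [← hs0]
    exact div_pos (hdipos s0) (mul_pos (hd s0) (hmpos s0))
  have hninfpos : 0 < ninf := lt_of_lt_of_le hκpos hκ_le_ninf
  have hidminpos : 0 < idmin := by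
    obtain ⟨s0, hs0⟩ := hidmin.1
    rw [← hs0]; exact mul_pos (hi s0) (hd s0)
  have hdmaxpos : 0 < dmax := by
    obtain ⟨s0, hs0⟩ := hdmax.1
    rw [← hs0]; exact hd s0
  have hdmax_ge : ∀ s, d s ≤ dmax := fun s => hdmax.2 (Set.mem_range_self s)
  have hdmin_le_dmax : dmin ≤ dmax := by
    obtain ⟨s0, hs0⟩ := hdmin.1
    rw [← hs0]; exact hdmax_ge s0
  have hdminpos : 0 < dmin := by
    obtain ⟨s0, hs0⟩ := hdmin.1
    rw [← hs0]; exact hd s0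
  have habs_m : ∀ s, |emph γ P d i s| = emph γ P d i s := fun s => abs_of_pos (hmpos s)
  have hsum_m_pos : 0 < ∑ s, |emph γ P d i s| := by
    apply Finset.sum_pos (fun s _ => by rw [habs_m s]; exact hmpos s)
    exact Finset.univ_nonempty
  have hsumdipos : 0 < ∑ s, di s := Finset.sum_pos (fun s _ => hdipos s) Finset.univ_nonempty
  -- chain: κ * dmin * ∑ di ≤ dmax^2 * ninf * ∑ |m|
  have hchain : κ * dmin * (∑ s, di s) ≤ dmax ^ 2 * ninf * ∑ s, |emph γ P d i s| := by
    have h1 : ∑ s, di s ≤ dmax * ∑ s, i s := by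
      rw [Finset.mul_sum]
      apply Finset.sum_le_sum
      intro s _
      exact mul_le_mul_of_nonneg_right (hdmax_ge s) (hi s).le
    have h2 : ∑ s, i s ≤ ∑ s, |emph γ P d i s| := by
      apply Finset.sum_le_sum
      intro s _
      rw [habs_m s]; exact hmge s
    have h3 : ∑ s, di s ≤ dmax * ∑ s, |emph γ P d i s| :=
      le_trans h1 (mul_le_mul_of_nonneg_left h2 hdmaxpos.le)
    calc κ * dmin * (∑ s, di s) ≤ ninf * dmax * (dmax * ∑ s, |emph γ P d i s|) := by
          apply mul_le_mul
          · exact mul_le_mul hκ_le_ninf hdmin_le_dmax hdminpos.le hninfpos.le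
          · exact h3
          · exact hsumdipos.le
          · positivity
      _ = dmax ^ 2 * ninf * ∑ s, |emph γ P d i s| := by ring
  -- γ^(n+1) * ∑ di ≤ idmin
  have hγn : γ ^ (n + 1) * (∑ s, di s) ≤ idmin := by
    have hD : 0 < dmax ^ 2 * ninf * ∑ s, |emph γ P d i s| := by positivity
    have hle : κ * dmin * idmin / (dmax ^ 2 * ninf * ∑ s, |emph γ P d i s|)
        ≤ idmin / ∑ s, di s := by
      rw [div_le_div_iff₀ hD hsumdipos]
      calc κ * dmin * idmin * ∑ s, di s = idmin * (κ * dmin * ∑ s, di s) := by ring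
        _ ≤ idmin * (dmax ^ 2 * ninf * ∑ s, |emph γ P d i s|) :=
            mul_le_mul_of_nonneg_left hchain hidminpos.le
        _ = idmin * (dmax ^ 2 * ninf * ∑ s, |emph γ P d i s|) := rfl
    have : γ ^ (n + 1) < idmin / ∑ s, di s := lt_of_lt_of_le hn hle
    rw [lt_div_iff₀ hsumdipos] at this
    exact this.le
  -- the truncated weighting vector F = f_n
  set F : S → ℝ := fun s => ∑ j ∈ Finset.range (n + 1), γ ^ j * (((Pᵀ) ^ j).mulVec di) s
    with hFdef
  have hTpow : ∀ (j : ℕ) (s s' : S), ((Pᵀ) ^ j) s s' = (P ^ j) s' s := by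
    intro j s s'
    rw [← Matrix.transpose_pow]
    rfl
  have hTpow_nonneg : ∀ (j : ℕ) (s s' : S), 0 ≤ ((Pᵀ) ^ j) s s' := by
    intro j s s'
    rw [hTpow]
    exact aux_pow_nonneg hP0 j s' s
  have hFeq : ∀ s, d s * truncEmph γ P d i n s = F s := by
    intro s
    show d s * ∑ j ∈ Finset.range (n + 1),
        γ ^ j * ((Matrix.diagonal fun s => (d s)⁻¹) * (Pᵀ) ^ j * Matrix.diagonal d).mulVec i s
      = _
    rw [Finset.mul_sum]
    apply Finset.sum_congr rfl
    intro j _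
    rw [← Matrix.mulVec_mulVec, ← Matrix.mulVec_mulVec, hDdi, Matrix.mulVec_diagonal,
      ← mul_assoc, mul_comm (d s) (γ ^ j), mul_assoc, ← mul_assoc (d s),
      mul_inv_cancel₀ (hd s).ne', one_mul]
  have hFpos : ∀ s, 0 < F s := by
    intro s
    apply Finset.sum_pos'
    · intro j _
      apply mul_nonneg (pow_nonneg hγ0 j)
      exact Finset.sum_nonneg fun t _ => mul_nonneg (hTpow_nonneg j s t) (hdipos t).le
    · refine ⟨0, Finset.mem_range.mpr (Nat.succ_pos n), ?_⟩
      rw [pow_zero, pow_zero, one_mul, Matrix.one_mulVec]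
      exact hdipos s
  have hFnonneg : ∀ s, 0 ≤ F s := fun s => (hFpos s).le
  -- the key emphasis inequality: γ (Pᵀ F) ≤ F
  have hkey : ∀ s', γ * (∑ s, P s s' * F s) ≤ F s' := by
    intro s'
    have hswap : ∑ s, P s s' * F s
        = ∑ j ∈ Finset.range (n + 1), γ ^ j * (((Pᵀ) ^ (j + 1)).mulVec di) s' := by
      calc ∑ s, P s s' * F s
          = ∑ s, ∑ j ∈ Finset.range (n + 1),
              P s s' * (γ ^ j * (((Pᵀ) ^ j).mulVec di) s) := by
            apply Finset.sum_congr rfl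
            intro s _
            rw [hFdef]
            exact Finset.mul_sum _ _ _
        _ = ∑ j ∈ Finset.range (n + 1), ∑ s,
              P s s' * (γ ^ j * (((Pᵀ) ^ j).mulVec di) s) := Finset.sum_comm
        _ = ∑ j ∈ Finset.range (n + 1), γ ^ j * (((Pᵀ) ^ (j + 1)).mulVec di) s' := by
            apply Finset.sum_congr rfl
            intro j _
            rw [pow_succ', ← Matrix.mulVec_mulVec]
            show _ = γ ^ j * ∑ s, Pᵀ s' s * (((Pᵀ) ^ j).mulVec di) s
            rw [Finset.mul_sum]
            apply Finset.sum_congr rfl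
            intro s _
            rw [Matrix.transpose_apply]
            ring
    have hstep : γ * ∑ j ∈ Finset.range (n + 1), γ ^ j * (((Pᵀ) ^ (j + 1)).mulVec di) s'
        = ∑ j ∈ Finset.range (n + 1), γ ^ (j + 1) * (((Pᵀ) ^ (j + 1)).mulVec di) s' := by
      rw [Finset.mul_sum]
      apply Finset.sum_congr rfl
      intro j _
      rw [pow_succ']
      ring
    set G : ℕ → ℝ := fun j => γ ^ j * (((Pᵀ) ^ j).mulVec di) s' with hGdef
    have hsum1 : ∑ j ∈ Finset.range (n + 2), G j
        = (∑ j ∈ Finset.range (n + 1), G (j + 1)) + G 0 := Finset.sum_range_succ' G (n + 1)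
    have hsum2 : ∑ j ∈ Finset.range (n + 2), G j
        = (∑ j ∈ Finset.range (n + 1), G j) + G (n + 1) := Finset.sum_range_succ G (n + 1)
    have hG0 : G 0 = di s' := by
      rw [hGdef]
      simp [Matrix.one_mulVec]
    have hGn1 : G (n + 1) ≤ di s' := by
      have h1 : (((Pᵀ) ^ (n + 1)).mulVec di) s' ≤ ∑ t, di t := by
        show ∑ t, ((Pᵀ) ^ (n + 1)) s' t * di t ≤ ∑ t, di t
        apply Finset.sum_le_sum
        intro t _
        have hle1 : ((Pᵀ) ^ (n + 1)) s' t ≤ 1 := by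
          rw [hTpow]
          exact aux_pow_le_one hP0 hP1 (n + 1) t s'
        nlinarith [hdipos t, hTpow_nonneg (n + 1) s' t]
      calc G (n + 1) = γ ^ (n + 1) * (((Pᵀ) ^ (n + 1)).mulVec di) s' := rfl
        _ ≤ γ ^ (n + 1) * ∑ t, di t :=
            mul_le_mul_of_nonneg_left h1 (pow_nonneg hγ0 _)
        _ ≤ idmin := hγn
        _ ≤ i s' * d s' := hidmin.2 (Set.mem_range_self s')
        _ = di s' := mul_comm _ _
    have hFs' : F s' = ∑ j ∈ Finset.range (n + 1), G j := rfl
    rw [hswap, hstep]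
    have : ∑ j ∈ Finset.range (n + 1), γ ^ (j + 1) * (((Pᵀ) ^ (j + 1)).mulVec di) s'
        = ∑ j ∈ Finset.range (n + 1), G (j + 1) := rfl
    rw [this, hFs']
    linarith
  -- value function fixed point
  set vπ : S → ℝ := ((1 - γ • P)⁻¹).mulVec rπ with hvdef
  have hv : ∀ s, vπ s = rπ s + γ * (P.mulVec vπ) s := by
    have hAv : (1 - γ • P).mulVec vπ = rπ := by
      rw [hvdef, Matrix.mulVec_mulVec, Matrix.mul_nonsing_inv _ hUdet, Matrix.one_mulVec]
    intro s
    have := congrFun hAv s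
    rw [Matrix.sub_mulVec, Matrix.one_mulVec, Matrix.smul_mulVec] at this
    simp only [Pi.sub_apply, Pi.smul_apply, smul_eq_mul] at this
    linarith
  -- projection in terms of F
  have hProj' : ∀ (v : S → ℝ) (w : Fin K → ℝ),
      ∑ s, F s * (Proj v s - v s) ^ 2 ≤ ∑ s, F s * (X.mulVec w s - v s) ^ 2 := by
    intro v w
    have h := (hProj v).2 w
    calc ∑ s, F s * (Proj v s - v s) ^ 2
        = ∑ s, (d s * truncEmph γ P d i n s) * (Proj v s - v s) ^ 2 := by
          apply Finset.sum_congr rfl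
          intro s _
          rw [hFeq s]
      _ ≤ ∑ s, (d s * truncEmph γ P d i n s) * (X.mulVec w s - v s) ^ 2 := h
      _ = ∑ s, F s * (X.mulVec w s - v s) ^ 2 := by
          apply Finset.sum_congr rfl
          intro s _
          rw [hFeq s]
  -- orthogonality of projection residual
  have horth : ∀ (v : S → ℝ) (w : Fin K → ℝ),
      ∑ s, F s * ((Proj v s - v s) * X.mulVec w s) = 0 := by
    intro v w
    obtain ⟨wv, hwv⟩ := (hProj v).1
    apply aux_quad_zero (C := ∑ s, F s * (X.mulVec w s) ^ 2)
    · exact Finset.sum_nonneg fun s _ => mul_nonneg (hFnonneg s) (sq_nonneg _)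
    · intro t
      have hmin := hProj' v (wv + t • w)
      have hXw : ∀ s, X.mulVec (wv + t • w) s = Proj v s + t * X.mulVec w s := by
        intro s
        rw [Matrix.mulVec_add, Matrix.mulVec_smul]
        simp only [Pi.add_apply, Pi.smul_apply, smul_eq_mul]
        rw [hwv]
      have hexp : ∑ s, F s * (X.mulVec (wv + t • w) s - v s) ^ 2
          = ∑ s, F s * (Proj v s - v s) ^ 2 +
            (t ^ 2 * ∑ s, F s * (X.mulVec w s) ^ 2 +
              2 * t * ∑ s, F s * ((Proj v s - v s) * X.mulVec w s)) := by
        calc ∑ s, F s * (X.mulVec (wv + t • w) s - v s) ^ 2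
            = ∑ s, (F s * (Proj v s - v s) ^ 2 +
                (t ^ 2 * (F s * (X.mulVec w s) ^ 2) +
                  2 * t * (F s * ((Proj v s - v s) * X.mulVec w s)))) := by
              apply Finset.sum_congr rfl
              intro s _
              rw [hXw s]
              ring
          _ = _ := by
              rw [Finset.sum_add_distrib, Finset.sum_add_distrib,
                ← Finset.mul_sum, ← Finset.mul_sum]
      rw [hexp] at hmin
      linarith
  -- abbreviations
  set u : S → ℝ := fun s => rπ s + γ * P.mulVec (X.mulVec wstar) s with hudef
  set q : S → ℝ := Proj vπ with hqdef
  obtain ⟨wq, hwq⟩ := (hProj vπ).1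
  have ha : ∀ s, X.mulVec wstar s - q s = X.mulVec (wstar - wq) s := by
    intro s
    rw [Matrix.mulVec_sub, hqdef, hwq]
    simp [Pi.sub_apply]
  -- orthogonality instances
  have horth1 : ∑ s, F s * ((q s - vπ s) * (X.mulVec wstar s - q s)) = 0 := by
    have h := horth vπ (wstar - wq)
    calc ∑ s, F s * ((q s - vπ s) * (X.mulVec wstar s - q s))
        = ∑ s, F s * ((Proj vπ s - vπ s) * X.mulVec (wstar - wq) s) := by
          apply Finset.sum_congr rfl
          intro s _
          rw [← ha s, ← hqdef]
      _ = 0 := h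
  have horth2 : ∑ s, F s * ((Proj u s - u s) * (X.mulVec wstar s - q s)) = 0 := by
    have h := horth u (wstar - wq)
    calc ∑ s, F s * ((Proj u s - u s) * (X.mulVec wstar s - q s))
        = ∑ s, F s * ((Proj u s - u s) * X.mulVec (wstar - wq) s) := by
          apply Finset.sum_congr rfl
          intro s _
          rw [← ha s]
      _ = 0 := h
  -- norms
  set e : S → ℝ := fun t => X.mulVec wstar t - vπ t with hedef
  set Ne : ℝ := ∑ s, F s * (e s) ^ 2 with hNedef
  set Na : ℝ := ∑ s, F s * (X.mulVec wstar s - q s) ^ 2 with hNadef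
  set Nq : ℝ := ∑ s, F s * (q s - vπ s) ^ 2 with hNqdef
  set Nu : ℝ := ∑ s, F s * (u s - vπ s) ^ 2 with hNudef
  have hNq_nonneg : 0 ≤ Nq :=
    Finset.sum_nonneg fun s _ => mul_nonneg (hFnonneg s) (sq_nonneg _)
  have hNu_nonneg : 0 ≤ Nu :=
    Finset.sum_nonneg fun s _ => mul_nonneg (hFnonneg s) (sq_nonneg _)
  have hNa_nonneg : 0 ≤ Na :=
    Finset.sum_nonneg fun s _ => mul_nonneg (hFnonneg s) (sq_nonneg _)
  -- Pythagoras
  have hpyth : Ne = Na + Nq := by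
    rw [hNedef, hNadef, hNqdef]
    calc ∑ s, F s * (e s) ^ 2
        = ∑ s, (F s * (X.mulVec wstar s - q s) ^ 2 + F s * (q s - vπ s) ^ 2 +
            2 * (F s * ((q s - vπ s) * (X.mulVec wstar s - q s)))) := by
          apply Finset.sum_congr rfl
          intro s _
          rw [hedef]
          ring
      _ = ∑ s, F s * (X.mulVec wstar s - q s) ^ 2 + ∑ s, F s * (q s - vπ s) ^ 2 := by
          rw [Finset.sum_add_distrib, Finset.sum_add_distrib, ← Finset.mul_sum, horth1,
            mul_zero, add_zero]
  -- the fixed point is the projection of its Bellman image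
  have hfixs : ∀ s, Proj u s = X.mulVec wstar s := fun s => congrFun hfix s
  -- nonexpansiveness step: Na ≤ Nu
  have hNa_eq : Na = ∑ s, F s * ((X.mulVec wstar s - q s) * (u s - vπ s)) := by
    rw [hNadef]
    calc ∑ s, F s * (X.mulVec wstar s - q s) ^ 2
        = ∑ s, (F s * ((Proj u s - u s) * (X.mulVec wstar s - q s))
            - F s * ((q s - vπ s) * (X.mulVec wstar s - q s))
            + F s * ((X.mulVec wstar s - q s) * (u s - vπ s))) := by
          apply Finset.sum_congr rfl
          intro s _
          rw [hfixs s]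
          ring
      _ = ∑ s, F s * ((X.mulVec wstar s - q s) * (u s - vπ s)) := by
          rw [Finset.sum_add_distrib, Finset.sum_sub_distrib, horth2, horth1]
          ring
  have hNa_le_Nu : Na ≤ Nu := by
    have hCS := aux_CS F (fun s => X.mulVec wstar s - q s) (fun s => u s - vπ s) hFnonneg
    rw [← hNa_eq] at hCS
    rcases eq_or_lt_of_le hNa_nonneg with h0 | hpos
    · rw [← h0]; exact hNu_nonneg
    · have h2 : Na ^ 2 ≤ Na * Nu := by
        calc Na ^ 2 ≤ (∑ s, F s * ((X.mulVec wstar s - q s) ^ 2)) *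
              (∑ s, F s * ((u s - vπ s) ^ 2)) := hCS
          _ = Na * Nu := by rw [hNadef, hNudef]
      nlinarith
  -- contraction step : Nu ≤ γ * Ne
  have hPe : ∀ s, P.mulVec e s = P.mulVec (X.mulVec wstar) s - P.mulVec vπ s := by
    intro s
    show ∑ t, P s t * (X.mulVec wstar t - vπ t) = _
    simp only [mul_sub]
    rw [Finset.sum_sub_distrib]
    rfl
  have hu_v : ∀ s, u s - vπ s = γ * P.mulVec e s := by
    intro s
    have h1 : u s = rπ s + γ * P.mulVec (X.mulVec wstar) s := rfl
    rw [hPe s, h1, hv s]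
    ring
  have hJ : ∀ s, (P.mulVec e s) ^ 2 ≤ ∑ t, P s t * (e t) ^ 2 := by
    intro s
    have h := aux_CS (fun t => P s t) (fun _ => (1 : ℝ)) e (hP0 s)
    simp only [one_mul, one_pow, mul_one] at h
    rw [hP1 s, one_mul] at h
    exact h
  have hcontract : Nu ≤ γ * Ne := by
    rw [hNudef, hNedef]
    calc ∑ s, F s * (u s - vπ s) ^ 2
        = ∑ s, γ ^ 2 * (F s * (P.mulVec e s) ^ 2) := by
          apply Finset.sum_congr rfl
          intro s _
          rw [hu_v s]
          ring
      _ ≤ ∑ s, γ ^ 2 * (F s * ∑ t, P s t * (e t) ^ 2) := by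
          apply Finset.sum_le_sum
          intro s _
          exact mul_le_mul_of_nonneg_left
            (mul_le_mul_of_nonneg_left (hJ s) (hFnonneg s)) (sq_nonneg γ)
      _ = ∑ s, ∑ t, γ ^ 2 * (F s * (P s t * (e t) ^ 2)) := by
          apply Finset.sum_congr rfl
          intro s _
          rw [Finset.mul_sum, Finset.mul_sum]
      _ = ∑ t, ∑ s, γ ^ 2 * (F s * (P s t * (e t) ^ 2)) := Finset.sum_comm
      _ = ∑ t, (γ * (e t) ^ 2) * (γ * ∑ s, P s t * F s) := by
          apply Finset.sum_congr rfl
          intro t _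
          rw [Finset.mul_sum, Finset.mul_sum]
          apply Finset.sum_congr rfl
          intro s _
          ring
      _ ≤ ∑ t, (γ * (e t) ^ 2) * F t := by
          apply Finset.sum_le_sum
          intro t _
          exact mul_le_mul_of_nonneg_left (hkey t) (by positivity)
      _ = γ * ∑ t, F t * (e t) ^ 2 := by
          rw [Finset.mul_sum]
          apply Finset.sum_congr rfl
          intro t _
          ring
  -- assemble
  clear_value Ne Na Nq Nu
  have h1γ : 0 < 1 - γ := by linarith
  have hNe_le : Ne ≤ Nq / (1 - γ) := by
    rw [le_div_iff₀ h1γ]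
    have hkey2 : Ne ≤ γ * Ne + Nq := by linarith
    calc Ne * (1 - γ) = Ne - γ * Ne := by ring
      _ ≤ Nq := by linarith
  have hgoal1 : ∑ s, (d s * truncEmph γ P d i n s) * (X.mulVec wstar s - vπ s) ^ 2 = Ne := by
    rw [hNedef]
    apply Finset.sum_congr rfl
    intro s _
    rw [hFeq s, hedef]
  have hgoal2 : ∑ s, (d s * truncEmph γ P d i n s) * (q s - vπ s) ^ 2 = Nq := by
    rw [hNqdef]
    apply Finset.sum_congr rfl
    intro s _
    rw [hFeq s]
  rw [hgoal1, hgoal2]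
  calc Real.sqrt Ne ≤ Real.sqrt (Nq / (1 - γ)) := Real.sqrt_le_sqrt hNe_le
    _ = Real.sqrt Nq / Real.sqrt (1 - γ) := Real.sqrt_div hNq_nonneg _
    _ = (1 / Real.sqrt (1 - γ)) * Real.sqrt Nq := by
        rw [one_div]
        ring

end
end
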